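/- arXiv:2209.04681 — 11 statements merged into one kernel-verified Lean document; each statement's English description precedes it below -/
import Mathlib

section
/- Let H_r be a real Hilbert space, L ⊆ H_r a closed subspace, and T : H_r → H_r a bounded, self-adjoint (symmetric), bijective linear operator. Then the subspace L + T(L) is dense in H_r if and only if T(L^⊥) ∩ L^⊥ = {0}. -/
/-- For a closed subspace `L` of a real Hilbert space and a bounded self-adjoint
bijective operator `T`, the subspace `L + T(L)` is dense iff `T(L^⊥) ∩ L^⊥ = {0}`. -/
theorem dense_sum_iff_map_orthogonal_inf_orthogonal_eq_bot
    {H : Type*} [NormedAddCommGroup H] [InnerProductSpace ℝ H] [CompleteSpace H]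
    (L : Submodule ℝ H) (hL : IsClosed (L : Set H))
    (T : H →L[ℝ] H) (hT : IsSelfAdjoint T) (hTbij : Function.Bijective T) :
    Dense ((↑(L ⊔ L.map (T : H →ₗ[ℝ] H)) : Set H)) ↔
      Lᗮ.map (T : H →ₗ[ℝ] H) ⊓ Lᗮ = ⊥ := by
  have hsym : ∀ x y : H, inner ℝ (T x) y = (inner ℝ x (T y) : ℝ) :=
    fun x y => (ContinuousLinearMap.isSelfAdjoint_iff_isSymmetric.mp hT) x y
  have key : ∀ x : H, x ∈ (L ⊔ L.map (T : H →ₗ[ℝ] H))ᗮ ↔ x ∈ Lᗮ ∧ T x ∈ Lᗮ := by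
    intro x
    rw [← Submodule.inf_orthogonal, Submodule.mem_inf]
    refine and_congr Iff.rfl ?_
    constructor
    · intro h
      rw [Submodule.mem_orthogonal]
      intro u hu
      have h1 := (Submodule.mem_orthogonal _ _).mp h (T u) ⟨u, hu, rfl⟩
      calc (inner ℝ u (T x) : ℝ) = inner ℝ (T u) x := (hsym u x).symm
        _ = 0 := h1
    · intro h
      rw [Submodule.mem_orthogonal]
      rintro v ⟨u, hu, rfl⟩
      have h1 := (Submodule.mem_orthogonal _ _).mp h u hu
      calc (inner ℝ (T u) x : ℝ) = inner ℝ u (T x) := by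
            rw [real_inner_comm, ← hsym, real_inner_comm]
        _ = 0 := h1
  rw [Submodule.dense_iff_topologicalClosure_eq_top,
    Submodule.topologicalClosure_eq_top_iff]
  constructor
  · intro h
    rw [Submodule.eq_bot_iff]
    rintro y ⟨⟨x, hx, rfl⟩, hTx⟩
    have hx0 : x = 0 := by
      have : x ∈ (⊥ : Submodule ℝ H) := h ▸ (key x).mpr ⟨hx, hTx⟩
      simpa using this
    simp [hx0]
  · intro h
    rw [Submodule.eq_bot_iff]
    intro x hx
    obtain ⟨hx1, hx2⟩ := (key x).mp hx
    have hTx0 : T x ∈ (⊥ : Submodule ℝ H) :=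
      h ▸ Submodule.mem_inf.mpr ⟨⟨x, hx1, rfl⟩, hx2⟩
    have : T x = T 0 := by simpa using hTx0
    exact hTbij.injective this
end

section
/- Let H be a nontrivial finite-dimensional complex inner product space of complex dimension n, and let L ⊆ H be a real-linear subspace that is standard (L ∩ iL = {0} and L + iL = H) and factorial (L ∩ L' = {0}, where L' is the symplectic complement of L). Then dim_ℝ L = dim_ℝ L' = n and L + L' = H; in particular H is the direct sum of the real subspaces L and L'. -/
/-- A standard and factorial real subspace `L` of an `n`-dimensional complex inner
product space `H` satisfies `dim_ℝ L = dim_ℝ L' = n` and `L + L' = H`; together with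
`L ∩ L' = {0}` this means `H` is the direct sum of `L` and its symplectic complement `L'`. -/
theorem standard_factorial_subspace_finrank_and_compl
    {H : Type*} [NormedAddCommGroup H] [InnerProductSpace ℂ H]
    [FiniteDimensional ℂ H] [Nontrivial H] (n : ℕ) (hn : Module.finrank ℂ H = n)
    (L L' : Submodule ℝ H)
    -- `L'` is the symplectic complement of `L`
    (hL' : ∀ g : H, g ∈ L' ↔ ∀ f ∈ L, (inner ℂ f g : ℂ).im = 0)
    -- `L` is standard: `L ∩ iL = {0}` and `L + iL = H`
    (hstd₁ : ∀ x ∈ L, ∀ y ∈ L, x = Complex.I • y → x = 0)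
    (hstd₂ : ∀ z : H, ∃ f ∈ L, ∃ g ∈ L, z = f + Complex.I • g)
    -- `L` is factorial: `L ∩ L' = {0}`
    (hfac : L ⊓ L' = ⊥) :
    Module.finrank ℝ L = n ∧ Module.finrank ℝ L' = n ∧ L ⊔ L' = ⊤ ∧ IsCompl L L' := by
  letI : InnerProductSpace ℝ H := InnerProductSpace.complexToReal
  haveI : FiniteDimensional ℝ H := FiniteDimensional.trans ℝ ℂ H
  have h2n : Module.finrank ℝ H = 2 * n := by
    rw [← Module.finrank_mul_finrank ℝ ℂ H, Complex.finrank_real_complex, hn]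
  -- the real-linear map (f, g) ↦ f + I • g
  have hsmul : ∀ (r : ℝ) (y : H), r • (Complex.I • y) = Complex.I • (r • y) := fun r y =>
    smul_comm r Complex.I y
  let φ : (L × L) →ₗ[ℝ] H :=
    { toFun := fun p => (p.1 : H) + Complex.I • (p.2 : H)
      map_add' := by
        intro p q
        simp only [Submodule.coe_add, Prod.fst_add, Prod.snd_add, smul_add]
        abel
      map_smul' := by
        intro r p
        simp only [Prod.smul_fst, Prod.smul_snd, SetLike.val_smul, RingHom.id_apply, smul_add,
          hsmul] }
  have hinj : Function.Injective φ := by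
    rw [← LinearMap.ker_eq_bot, LinearMap.ker_eq_bot']
    rintro ⟨⟨f, hf⟩, ⟨g, hg⟩⟩ h
    have h0 : f + Complex.I • g = 0 := h
    have hfe : f = Complex.I • (-g) := by
      rw [smul_neg, eq_neg_iff_add_eq_zero]; exact h0
    have hf0 : f = 0 := hstd₁ f hf (-g) (neg_mem hg) hfe
    have hg0 : g = 0 := by
      have : Complex.I • g = 0 := by rw [hf0, zero_add] at h0; exact h0
      rcases smul_eq_zero.mp this with h | h
      · exact absurd h Complex.I_ne_zero
      · exact h
    ext <;> simp [hf0, hg0]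
  have hsurj : Function.Surjective φ := by
    intro z
    obtain ⟨f, hf, g, hg, hz⟩ := hstd₂ z
    exact ⟨(⟨f, hf⟩, ⟨g, hg⟩), hz.symm⟩
  have hrankL : Module.finrank ℝ L = n := by
    have := (LinearEquiv.ofBijective φ ⟨hinj, hsurj⟩).finrank_eq
    rw [Module.finrank_prod, h2n] at this
    omega
  -- J = multiplication by I, as a real-linear equivalence
  let J : H ≃ₗ[ℝ] H :=
    (LinearEquiv.smulOfNeZero ℂ H Complex.I Complex.I_ne_zero).restrictScalars ℝ
  have hJ : ∀ x : H, J x = Complex.I • x := fun x => rfl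
  -- L' is the real-orthogonal complement of I • L
  have hKrank : Module.finrank ℝ (L.map (J : H →ₗ[ℝ] H)) = n := by
    rw [LinearEquiv.finrank_map_eq J L, hrankL]
  have hL'eq : L' = (L.map (J : H →ₗ[ℝ] H))ᗮ := by
    ext g
    rw [hL' g, Submodule.mem_orthogonal]
    constructor
    · rintro h u hu
      obtain ⟨f, hf, rfl⟩ := hu
      have him := h f hf
      have hJf : ((J : H →ₗ[ℝ] H) f : H) = Complex.I • f := rfl
      rw [hJf, real_inner_eq_re_inner ℂ, inner_smul_left]
      simp [Complex.ext_iff, him]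
    · intro h f hf
      have hJf : ((J : H →ₗ[ℝ] H) f : H) = Complex.I • f := rfl
      have := h ((J : H →ₗ[ℝ] H) f) ⟨f, hf, rfl⟩
      rw [hJf, real_inner_eq_re_inner ℂ, inner_smul_left] at this
      simpa [Complex.ext_iff] using this
  have hrankL' : Module.finrank ℝ L' = n := by
    have horth := Submodule.finrank_add_finrank_orthogonal (K := L.map (J : H →ₗ[ℝ] H))
    rw [hKrank, h2n] at horth
    rw [hL'eq]
    omega
  have hsup : L ⊔ L' = ⊤ := by
    have hd := Submodule.finrank_sup_add_finrank_inf_eq L L'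
    rw [hfac, hrankL, hrankL', finrank_bot] at hd
    apply Submodule.eq_top_of_finrank_eq
    omega
  exact ⟨hrankL, hrankL', hsup, ⟨disjoint_iff.mpr hfac, codisjoint_iff.mpr hsup⟩⟩
end

section
/- Let H be a finite-dimensional complex inner product space and L ⊆ H a real-linear subspace that is standard and factorial. Let P be the ℝ-linear projection on H with range L and kernel L', and define Q : H → H by Qx := Px − i·P(i·x) − x. Then Q is complex-linear (Q(i·x) = i·Q(x) for all x) and self-adjoint with respect to the complex inner product of H: ⟨Qx, y⟩ = ⟨x, Qy⟩ for all x, y ∈ H. -/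
/-- For a standard factorial real subspace `L` of a finite-dimensional complex inner
product space, with `P` the real-linear projection onto `L` along `L'`, the operator
`Q = P - i P i - 1` is complex-linear and self-adjoint for the complex inner ℂ product. -/
theorem cutting_projection_Q_complexLinear_selfAdjoint
    {H : Type*} [NormedAddCommGroup H] [InnerProductSpace ℂ H] [FiniteDimensional ℂ H]
    (L L' : Submodule ℝ H)
    -- `L'` is the symplectic complement of `L`
    (hL' : ∀ g : H, g ∈ L' ↔ ∀ f ∈ L, (inner ℂ f g : ℂ).im = 0)
    -- `L` is standard: `L ∩ iL = {0}` and `L + iL = H`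
    (hstd₁ : ∀ x ∈ L, ∀ y ∈ L, x = Complex.I • y → x = 0)
    (hstd₂ : ∀ z : H, ∃ f ∈ L, ∃ g ∈ L, z = f + Complex.I • g)
    -- `L` is factorial: `L ∩ L' = {0}`
    (hfac : L ⊓ L' = ⊥)
    -- `P` is the real-linear projection with range `L` and kernel `L'`
    (P : H →ₗ[ℝ] H) (hPrange : LinearMap.range P = L) (hPker : LinearMap.ker P = L')
    (hPidem : ∀ x, P (P x) = P x)
    -- `Q x = P x - i P (i x) - x`
    (Q : H → H) (hQ : ∀ x, Q x = P x - Complex.I • P (Complex.I • x) - x) :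
    (∀ x : H, Q (Complex.I • x) = Complex.I • Q x) ∧
      (∀ x y : H, (inner ℂ (Q x) y : ℂ) = inner ℂ x (Q y)) := by
  have hPI : ∀ x : H, P (Complex.I • (Complex.I • x)) = - P x := by
    intro x
    rw [smul_smul, Complex.I_mul_I, neg_one_smul, map_neg]
  have hlin : ∀ x : H, Q (Complex.I • x) = Complex.I • Q x := by
    intro x
    rw [hQ, hQ, hPI, smul_neg, smul_sub, smul_sub, smul_smul, Complex.I_mul_I,
      neg_one_smul]
    abel
  refine ⟨hlin, ?_⟩
  have hPmem : ∀ x : H, P x ∈ L := fun x => hPrange ▸ LinearMap.mem_range_self P x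
  have hker : ∀ x : H, x - P x ∈ L' := by
    intro x
    rw [← hPker, LinearMap.mem_ker, map_sub, hPidem, sub_self]
  -- P is symmetric for the symplectic form Im ⟨·,·⟩
  have hωP : ∀ x y : H, (inner ℂ (P x) y : ℂ).im = (inner ℂ x (P y) : ℂ).im := by
    intro x y
    have h1 : (inner ℂ (P x) (y - P y) : ℂ).im = 0 := (hL' _).1 (hker y) _ (hPmem x)
    have h2 : (inner ℂ (P y) (x - P x) : ℂ).im = 0 := (hL' _).1 (hker x) _ (hPmem y)
    have h2' : (inner ℂ (x - P x) (P y) : ℂ).im = 0 := by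
      rw [← inner_conj_symm, Complex.conj_im, h2, neg_zero]
    rw [inner_sub_right, Complex.sub_im, sub_eq_zero] at h1
    rw [inner_sub_left, Complex.sub_im, sub_eq_zero] at h2'
    rw [h1, h2']
  -- Re ⟨f, g⟩ = Im ⟨f, i g⟩
  have hA : ∀ f g : H, (inner ℂ f g : ℂ).re = (inner ℂ f (Complex.I • g) : ℂ).im := by
    intro f g
    rw [inner_smul_right]
    simp [Complex.mul_im]
  -- Im ⟨i f, g⟩ = - Re ⟨f, g⟩
  have hB : ∀ f g : H, (inner ℂ (Complex.I • f) g : ℂ).im = - (inner ℂ f g : ℂ).re := by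
    intro f g
    rw [inner_smul_left, Complex.conj_I]
    simp [Complex.mul_im]
  have key : ∀ x y : H, (inner ℂ (P x) y : ℂ).re - (inner ℂ (P (Complex.I • x)) y : ℂ).im
      = (inner ℂ x (P y) : ℂ).re + (inner ℂ x (P (Complex.I • y)) : ℂ).im := by
    intro x y
    rw [hA (P x) y, hωP x (Complex.I • y), hωP (Complex.I • x) y, hB x (P y)]
    ring
  have key2 : ∀ x y : H, (inner ℂ (P x) y : ℂ).im + (inner ℂ (P (Complex.I • x)) y : ℂ).re
      = (inner ℂ x (P y) : ℂ).im - (inner ℂ x (P (Complex.I • y)) : ℂ).re := by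
    intro x y
    rw [hωP x y, hA (P (Complex.I • x)) y, hωP (Complex.I • x) (Complex.I • y),
      hB x (P (Complex.I • y))]
    ring
  intro x y
  apply Complex.ext
  · rw [hQ x, hQ y, inner_sub_left, inner_sub_left, inner_sub_right, inner_sub_right,
      inner_smul_left, inner_smul_right, Complex.conj_I]
    simp only [Complex.sub_re, Complex.mul_re, Complex.mul_im, Complex.neg_re,
      Complex.neg_im, Complex.I_re, Complex.I_im]
    have := key x y
    ring_nf
    ring_nf at this
    linarith
  · rw [hQ x, hQ y, inner_sub_left, inner_sub_left, inner_sub_right, inner_sub_right,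
      inner_smul_left, inner_smul_right, Complex.conj_I]
    simp only [Complex.sub_im, Complex.mul_re, Complex.mul_im, Complex.neg_re,
      Complex.neg_im, Complex.I_re, Complex.I_im]
    have := key2 x y
    ring_nf
    ring_nf at this
    linarith
end

section
/- Let H be a finite-dimensional complex inner product space and L ⊆ H a real-linear subspace that is standard and factorial. Let P be the ℝ-linear projection on H with range L and kernel L', and define Q : H → H by Qx := Px − i·P(i·x) − x. Then ⟨x, Q²x⟩ > ⟨x, x⟩ for every nonzero x ∈ H; equivalently, every eigenvalue λ of the self-adjoint operator Q satisfies |λ| > 1, i.e. the spectrum of Q is contained in (−∞,−1) ∪ (1,∞). -/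
/-- For a standard factorial real subspace `L` of a finite-dimensional complex inner
product space, with `P` the real-linear projection onto `L` along `L'`, the operator
`Q = P - i P i - 1` satisfies `⟨x, Q²x⟩ > ⟨x, x⟩` for all `x ≠ 0`; equivalently every
eigenvalue `λ` of `Q` satisfies `|λ| > 1`. -/
theorem cutting_projection_Q_spectrum_outside_unit_interval
    {H : Type*} [NormedAddCommGroup H] [InnerProductSpace ℂ H] [FiniteDimensional ℂ H]
    (L L' : Submodule ℝ H)
    -- `L'` is the symplectic complement of `L`
    (hL' : ∀ g : H, g ∈ L' ↔ ∀ f ∈ L, (inner ℂ f g : ℂ).im = 0)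
    -- `L` is standard: `L ∩ iL = {0}` and `L + iL = H`
    (hstd₁ : ∀ x ∈ L, ∀ y ∈ L, x = Complex.I • y → x = 0)
    (hstd₂ : ∀ z : H, ∃ f ∈ L, ∃ g ∈ L, z = f + Complex.I • g)
    -- `L` is factorial: `L ∩ L' = {0}`
    (hfac : L ⊓ L' = ⊥)
    -- `P` is the real-linear projection with range `L` and kernel `L'`
    (P : H →ₗ[ℝ] H) (hPrange : LinearMap.range P = L) (hPker : LinearMap.ker P = L')
    (hPidem : ∀ x, P (P x) = P x)
    -- `Q x = P x - i P (i x) - x`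
    (Q : H → H) (hQ : ∀ x, Q x = P x - Complex.I • P (Complex.I • x) - x) :
    (∀ x : H, x ≠ 0 → (inner ℂ x x : ℂ).re < (inner ℂ x (Q (Q x)) : ℂ).re) ∧
      (∀ (l : ℝ) (x : H), x ≠ 0 → Q x = (l : ℂ) • x → 1 < |l|) := by
  classical
  -- positivity of the inner ℂ product
  have hpos : ∀ z : H, z ≠ 0 → 0 < (inner ℂ z z : ℂ).re := by
    intro z hz
    have h := inner_self_eq_norm_mul_norm (𝕜 := ℂ) z
    simp only [RCLike.re_to_complex] at h
    have hz' : 0 < ‖z‖ := norm_pos_iff.2 hz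
    rw [h]
    positivity
  -- range of P
  have hPL : ∀ x : H, P x ∈ L := by
    intro x
    rw [← hPrange]
    exact LinearMap.mem_range_self P x
  -- kernel of P
  have hkerP : ∀ g : H, P g = 0 → ∀ f ∈ L, (inner ℂ f g : ℂ).im = 0 := by
    intro g hg f hf
    have : g ∈ L' := by rw [← hPker]; exact LinearMap.mem_ker.2 hg
    exact (hL' g).1 this f hf
  -- P is symplectically self-adjoint
  have Psymp : ∀ x y : H, (inner ℂ (P x) y : ℂ).im = (inner ℂ x (P y) : ℂ).im := by
    intro x y
    have hx0 : P (x - P x) = 0 := by simp [map_sub, hPidem]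
    have hy0 : P (y - P y) = 0 := by simp [map_sub, hPidem]
    have h1 : (inner ℂ (P x) (y - P y) : ℂ).im = 0 := hkerP _ hy0 _ (hPL x)
    have h2 : (inner ℂ (P y) (x - P x) : ℂ).im = 0 := hkerP _ hx0 _ (hPL y)
    have h2' : (inner ℂ (x - P x) (P y) : ℂ).im = 0 := by
      rw [← inner_conj_symm, Complex.conj_im, h2, neg_zero]
    have e1 : (inner ℂ (P x) y : ℂ) = inner ℂ (P x) (P y) + inner ℂ (P x) (y - P y) := by
      rw [← inner_add_right]
      congr 1
      abel
    have e2 : (inner ℂ x (P y) : ℂ) = inner ℂ (P x) (P y) + inner ℂ (x - P x) (P y) := by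
      rw [← inner_add_left]
      congr 1
      abel
    rw [e1, e2, Complex.add_im, Complex.add_im, h1, h2']
  -- the operator T = P + i P i
  set T : H → H := fun x => P x + Complex.I • P (Complex.I • x) with hT
  -- T is antisymmetric for the real part of the inner ℂ product
  have hanti : ∀ x y : H, (inner ℂ (T x) y : ℂ).re = -(inner ℂ x (T y) : ℂ).re := by
    intro x y
    have k1 : (inner ℂ (P (Complex.I • x)) y : ℂ).im = -(inner ℂ x (P y) : ℂ).re := by
      rw [Psymp (Complex.I • x) y, inner_smul_left]
      simp
    have k2 : (inner ℂ x (P (Complex.I • y)) : ℂ).im = (inner ℂ (P x) y : ℂ).re := by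
      rw [← Psymp x (Complex.I • y), inner_smul_right]
      simp
    simp only [hT, inner_add_left, inner_add_right, inner_smul_left, inner_smul_right,
      Complex.add_re, Complex.add_im]
    simp only [Complex.conj_I, Complex.neg_re, Complex.neg_im, Complex.mul_re, Complex.I_re,
      Complex.I_im]
    rw [k1] at *
    rw [k2] at *
    ring
  -- Q² = 1 - T²
  have hQQ : ∀ x : H, Q (Q x) = x - T (T x) := by
    intro x
    have hb : P (P (Complex.I • x)) = P (Complex.I • x) := hPidem _
    simp only [hQ, hT]
    simp only [map_sub, map_add, smul_sub, smul_add, smul_smul, Complex.I_mul_I,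
      neg_one_smul, map_neg, map_smul, hPidem, hb]
    module
  -- T is injective
  have hTne : ∀ x : H, x ≠ 0 → T x ≠ 0 := by
    intro x hx hTx
    apply hx
    -- from T x = 0 deduce P x = 0 and P (I • x) = 0
    have hPx : P x = Complex.I • (-(P (Complex.I • x))) := by
      rw [smul_neg, ← neg_smul]
      have := hTx
      simp only [hT] at this
      linear_combination (norm := module) this
    have hPx0 : P x = 0 :=
      hstd₁ (P x) (hPL x) (-(P (Complex.I • x))) (neg_mem (hPL (Complex.I • x))) hPx
    have hPIx0 : P (Complex.I • x) = 0 := by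
      have h0 : Complex.I • P (Complex.I • x) = 0 := by
        have := hTx
        simp only [hT, hPx0, zero_add] at this
        exact this
      have := congrArg (fun z => (-Complex.I) • z) h0
      simpa [smul_smul] using this
    -- hence ⟪f, x⟫ = 0 for all f ∈ L
    have horth : ∀ f ∈ L, (inner ℂ f x : ℂ) = 0 := by
      intro f hf
      have him : (inner ℂ f x : ℂ).im = 0 := hkerP x hPx0 f hf
      have hre : (inner ℂ f (Complex.I • x) : ℂ).im = 0 := hkerP _ hPIx0 f hf
      rw [inner_smul_right] at hre
      simp only [Complex.mul_im, Complex.I_re, Complex.I_im] at hre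
      apply Complex.ext
      · simpa [him] using hre
      · exact him
    obtain ⟨f, hf, g, hg, hz⟩ := hstd₂ x
    have : (inner ℂ x x : ℂ) = 0 := by
      have h := congrArg (fun z => (inner ℂ z x : ℂ)) hz
      simp only [inner_add_left, inner_smul_left, horth f hf, horth g hg] at h
      simpa using h
    exact inner_self_eq_zero.1 this
  -- first part
  have main : ∀ x : H, x ≠ 0 → (inner ℂ x x : ℂ).re < (inner ℂ x (Q (Q x)) : ℂ).re := by
    intro x hx
    rw [hQQ x, inner_sub_right]
    have hTsym : (inner ℂ x (T (T x)) : ℂ).re = -(inner ℂ (T x) (T x) : ℂ).re := by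
      have := hanti x (T x)
      linarith
    rw [Complex.sub_re, hTsym]
    have := hpos (T x) (hTne x hx)
    linarith
  refine ⟨main, ?_⟩
  intro l x hx hlx
  have hQ2 : Q (Q x) = ((l : ℂ) * l) • x := by
    rw [hlx]
    have hsm : ((l : ℂ)) • x = (l : ℝ) • x := by
      rw [← algebraMap_smul ℂ l x]
      rfl
    rw [hsm, hQ]
    rw [map_smul, smul_comm (Complex.I) (l : ℝ) x, map_smul, smul_comm (Complex.I) (l : ℝ)]
    rw [← smul_sub, ← smul_sub, ← hQ, hlx, hsm, smul_smul]
    rw [← algebraMap_smul ℂ (l * l) x]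
    push_cast
    rfl
  have h1 := main x hx
  rw [hQ2, inner_smul_right] at h1
  have hre : ((l : ℂ) * l * inner ℂ x x).re = (l * l) * (inner ℂ x x : ℂ).re := by
    have : ((l : ℂ) * l) = ((l * l : ℝ) : ℂ) := by push_cast; ring
    rw [this, Complex.re_ofReal_mul]
  rw [hre] at h1
  have hp := hpos x hx
  have hll : 1 < l * l := by nlinarith
  nlinarith [abs_mul_abs_self l, abs_nonneg l]
end

section
/- Let H be a finite-dimensional complex inner product space and L ⊆ H a real-linear subspace that is standard and factorial. Let T : H → H be the Tomita operator of L and Δ := T† ∘ T the one-particle modular operator, and let P be the ℝ-linear projection on H with range L and kernel L'. Then Δ is complex-linear, self-adjoint and positive-definite, the operator 1 − Δ is bijective, and P − i·P(i·) − 1 = (1 + Δ) ∘ (1 − Δ)⁻¹, i.e. the operator Q defined by Qx := Px − i·P(i·x) − x equals (1+Δ)(1−Δ)⁻¹. -/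
/-- For a standard factorial real subspace `L` of a finite-dimensional complex inner
product space, with Tomita operator `T`, modular operator `Δ = T† T` (adjoint for the
real inner product `Re⟨·,·⟩`), and `P` the real-linear projection onto `L` along `L'`:
`Δ` is complex-linear, self-adjoint and positive-definite, `1 - Δ` is bijective, and
`Q = P - i P i - 1` equals `(1 + Δ)(1 - Δ)⁻¹`. -/
theorem cutting_projection_eq_modular_formula
    {H : Type*} [NormedAddCommGroup H] [InnerProductSpace ℂ H] [FiniteDimensional ℂ H]
    (L L' : Submodule ℝ H)
    -- `L'` is the symplectic complement of `L`
    (hL' : ∀ g : H, g ∈ L' ↔ ∀ f ∈ L, (inner ℂ f g : ℂ).im = 0)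
    -- `L` is standard: `L ∩ iL = {0}` and `L + iL = H`
    (hstd₁ : ∀ x ∈ L, ∀ y ∈ L, x = Complex.I • y → x = 0)
    (hstd₂ : ∀ z : H, ∃ f ∈ L, ∃ g ∈ L, z = f + Complex.I • g)
    -- `L` is factorial: `L ∩ L' = {0}`
    (hfac : L ⊓ L' = ⊥)
    -- `T` is the Tomita operator of `L`: `T(f + i g) = f - i g` for `f, g ∈ L`
    (T : H →ₗ[ℝ] H) (hT : ∀ f ∈ L, ∀ g ∈ L, T (f + Complex.I • g) = f - Complex.I • g)
    -- `T†` is the adjoint of `T` with respect to the real inner product `Re⟨·,·⟩`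
    (Tadj : H →ₗ[ℝ] H)
    (hTadj : ∀ x y : H, (inner ℂ (Tadj x) y : ℂ).re = (inner ℂ x (T y) : ℂ).re)
    -- the one-particle modular operator `Δ = T† ∘ T`
    (Δ : H →ₗ[ℝ] H) (hΔ : ∀ x, Δ x = Tadj (T x))
    -- `P` is the real-linear projection with range `L` and kernel `L'`
    (P : H →ₗ[ℝ] H) (hPrange : LinearMap.range P = L) (hPker : LinearMap.ker P = L')
    (hPidem : ∀ x, P (P x) = P x)
    -- `Q x = P x - i P (i x) - x`
    (Q : H → H) (hQ : ∀ x, Q x = P x - Complex.I • P (Complex.I • x) - x) :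
    (∀ x : H, Δ (Complex.I • x) = Complex.I • Δ x) ∧
      (∀ x y : H, (inner ℂ (Δ x) y : ℂ) = inner ℂ x (Δ y)) ∧
      (∀ x : H, x ≠ 0 → 0 < (inner ℂ x (Δ x) : ℂ).re) ∧
      Function.Bijective (fun x : H => x - Δ x) ∧
      (∀ x : H, Q (x - Δ x) = x + Δ x) := by
  -- basic real-inner-product facts
  have reSwap : ∀ a b : H, (inner ℂ a b : ℂ).re = (inner ℂ b a : ℂ).re := by
    intro a b
    have := inner_re_symm (𝕜 := ℂ) a b
    simpa using this
  have reIm : ∀ a b : H, (inner ℂ (Complex.I • a) b : ℂ).re = (inner ℂ a b : ℂ).im := by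
    intro a b
    rw [inner_smul_left]
    simp [Complex.conj_I]
  have reIr : ∀ a b : H, (inner ℂ a (Complex.I • b) : ℂ).re = -(inner ℂ (Complex.I • a) b : ℂ).re := by
    intro a b
    rw [inner_smul_left, inner_smul_right]
    simp [Complex.conj_I]
  have nondeg : ∀ u : H, (∀ y : H, (inner ℂ u y : ℂ).re = 0) → u = 0 := by
    intro u h
    have h2 : RCLike.re (inner ℂ u u : ℂ) = ‖u‖ ^ 2 := inner_self_eq_norm_sq u
    rw [RCLike.re_to_complex, h u] at h2
    have : ‖u‖ = 0 := by
      have := h2.symm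
      exact pow_eq_zero_iff (by norm_num) |>.mp this
    simpa using this
  -- T fixes L
  have hTf : ∀ f ∈ L, T f = f := by
    intro f hf
    have := hT f hf 0 L.zero_mem
    simpa using this
  -- T is an involution
  have hTT : ∀ z : H, T (T z) = z := by
    intro z
    obtain ⟨f, hf, g, hg, rfl⟩ := hstd₂ z
    rw [hT f hf g hg]
    have h1 : f - Complex.I • g = f + Complex.I • (-g) := by rw [smul_neg]; abel
    rw [h1, hT f hf (-g) (L.neg_mem hg), smul_neg]
    abel
  -- T anticommutes with multiplication by I
  have hTJ : ∀ z : H, T (Complex.I • z) = -(Complex.I • T z) := by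
    intro z
    obtain ⟨f, hf, g, hg, rfl⟩ := hstd₂ z
    have h1 : Complex.I • (f + Complex.I • g) = -g + Complex.I • f := by
      rw [smul_add, smul_smul, Complex.I_mul_I, neg_one_smul]; abel
    rw [h1, hT (-g) (L.neg_mem hg) f hf, hT f hf g hg, smul_sub, smul_smul,
      Complex.I_mul_I, neg_one_smul]
    abel
  -- Tadj anticommutes with multiplication by I
  have hTadjJ : ∀ z : H, Tadj (Complex.I • z) = -(Complex.I • Tadj z) := by
    intro z
    have key : ∀ y : H, (inner ℂ (Tadj (Complex.I • z) + Complex.I • Tadj z) y : ℂ).re = 0 := by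
      intro y
      rw [inner_add_left, Complex.add_re, hTadj]
      have e1 : (inner ℂ (Complex.I • Tadj z) y : ℂ).re
          = -(inner ℂ (Tadj z) (Complex.I • y) : ℂ).re := by
        rw [reIr]; ring
      rw [e1, hTadj, hTJ, inner_neg_right, Complex.neg_re, reIr]
      ring
    exact eq_neg_of_add_eq_zero_left (nondeg _ key)
  -- Tadj is an involution
  have hTadj2 : ∀ z : H, Tadj (Tadj z) = z := by
    intro z
    have key : ∀ y : H, (inner ℂ (Tadj (Tadj z) - z) y : ℂ).re = 0 := by
      intro y
      rw [inner_sub_left, Complex.sub_re, hTadj, hTadj, hTT]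
      ring
    have := nondeg _ key
    have := sub_eq_zero.mp this
    exact this
  -- Δ commutes with multiplication by I
  have hΔJ : ∀ x : H, Δ (Complex.I • x) = Complex.I • Δ x := by
    intro x
    rw [hΔ, hΔ, hTJ, map_neg, hTadjJ, neg_neg]
  -- fixed points of T are in L
  have hfix : ∀ z : H, T z = z → z ∈ L := by
    intro z hz
    obtain ⟨f, hf, g, hg, rfl⟩ := hstd₂ z
    rw [hT f hf g hg] at hz
    have h2 : -(Complex.I • g) = Complex.I • g := by
      have h2' := hz
      rw [sub_eq_add_neg] at h2'
      exact add_left_cancel h2'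
    have h3 : Complex.I • g = 0 := by
      have h1 : (2 : ℝ) • (Complex.I • g) = 0 := by
        rw [two_smul]
        exact neg_eq_iff_add_eq_zero.mp h2
      rcases smul_eq_zero.mp h1 with h | h
      · norm_num at h
      · exact h
    have hg0 : g = 0 := by
      have := smul_eq_zero.mp h3
      rcases this with h | h
      · exact absurd h Complex.I_ne_zero
      · exact h
    rw [hg0]
    simpa using hf
  -- fixed points of Tadj are in L'
  have hker : ∀ g : H, Tadj g = g → g ∈ L' := by
    intro g hg
    rw [hL']
    intro f hf
    have e1 : (inner ℂ f g : ℂ).im = (inner ℂ (Complex.I • f) g : ℂ).re := (reIm f g).symm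
    have e2 : (inner ℂ (Complex.I • f) g : ℂ).re = -(inner ℂ (Complex.I • f) g : ℂ).re := by
      calc (inner ℂ (Complex.I • f) g : ℂ).re
          = (inner ℂ (Complex.I • f) (Tadj g) : ℂ).re := by rw [hg]
        _ = (inner ℂ (Tadj g) (Complex.I • f) : ℂ).re := reSwap _ _
        _ = (inner ℂ g (T (Complex.I • f)) : ℂ).re := hTadj _ _
        _ = (inner ℂ g (-(Complex.I • f)) : ℂ).re := by rw [hTJ, hTf f hf]
        _ = -(inner ℂ g (Complex.I • f) : ℂ).re := by rw [inner_neg_right, Complex.neg_re]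
        _ = -(inner ℂ (Complex.I • f) g : ℂ).re := by rw [reSwap]
    rw [e1]
    linarith
  -- P fixes L and kills L'
  have hPL : ∀ l ∈ L, P l = l := by
    intro l hl
    rw [← hPrange] at hl
    obtain ⟨y, rfl⟩ := hl
    exact hPidem y
  have hPL' : ∀ g ∈ L', P g = 0 := by
    intro g hg
    rw [← hPker] at hg
    exact hg
  -- the key projection formula: P (x - Δ x) = x + T x
  have hPformula : ∀ x : H, P (x - Δ x) = x + T x := by
    intro x
    have hdecomp : x - Δ x = (x + T x) + (-(T x + Tadj (T x))) := by
      rw [hΔ]; abel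
    have hmem1 : x + T x ∈ L := hfix _ (by rw [map_add, hTT]; abel)
    have hmem2 : -(T x + Tadj (T x)) ∈ L' := by
      apply hker
      rw [map_neg, map_add, hTadj2]
      abel
    rw [hdecomp, map_add, hPL _ hmem1, hPL' _ hmem2, add_zero]
  -- self-adjointness (complex)
  have hsa : ∀ x y : H, (inner ℂ (Δ x) y : ℂ) = inner ℂ x (Δ y) := by
    intro x y
    apply Complex.ext
    · rw [hΔ, hTadj]
      rw [reSwap x (Δ y), hΔ, hTadj, reSwap]
    · have l1 : (inner ℂ (Δ x) y : ℂ).im = (inner ℂ (Complex.I • Δ x) y : ℂ).re := (reIm _ _).symm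
      have l2 : (inner ℂ x (Δ y) : ℂ).im = (inner ℂ (Complex.I • x) (Δ y) : ℂ).re := (reIm _ _).symm
      have c1 : (inner ℂ (Complex.I • Δ x) y : ℂ).re
          = -(inner ℂ (Complex.I • T x) (T y) : ℂ).re := by
        calc (inner ℂ (Complex.I • Δ x) y : ℂ).re
            = (inner ℂ (Δ (Complex.I • x)) y : ℂ).re := by rw [hΔJ]
          _ = (inner ℂ (T (Complex.I • x)) (T y) : ℂ).re := by rw [hΔ, hTadj]
          _ = -(inner ℂ (Complex.I • T x) (T y) : ℂ).re := by
              rw [hTJ, inner_neg_left, Complex.neg_re]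
      have c2 : (inner ℂ (Complex.I • x) (Δ y) : ℂ).re
          = -(inner ℂ (Complex.I • T x) (T y) : ℂ).re := by
        calc (inner ℂ (Complex.I • x) (Δ y) : ℂ).re
            = (inner ℂ (Δ y) (Complex.I • x) : ℂ).re := reSwap _ _
          _ = (inner ℂ (T y) (T (Complex.I • x)) : ℂ).re := by rw [hΔ, hTadj]
          _ = -(inner ℂ (T y) (Complex.I • T x) : ℂ).re := by
              rw [hTJ, inner_neg_right, Complex.neg_re]
          _ = -(inner ℂ (Complex.I • T x) (T y) : ℂ).re := by rw [reSwap]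
      rw [l1, l2, c1, c2]
  have hinj : ∀ x : H, x - Δ x = 0 → x = 0 := by
    intro x hx
    have hΔx : Δ x = x := by
      have := sub_eq_zero.mp hx
      exact this.symm
    have hΔx' : Tadj (T x) = x := by rw [← hΔ, hΔx]
    -- u = x + T x lies in L ∩ L'
    have huL : x + T x ∈ L := hfix _ (by rw [map_add, hTT]; abel)
    have huL' : x + T x ∈ L' := by
      rw [hL']
      intro f hf
      have e0 : (inner ℂ f (x + T x) : ℂ).im = (inner ℂ (Complex.I • f) (x + T x) : ℂ).re :=
        (reIm _ _).symm
      rw [e0, inner_add_right, Complex.add_re]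
      have e1 : (inner ℂ (Complex.I • f) x : ℂ).re = -(inner ℂ (Complex.I • f) (T x) : ℂ).re := by
        calc (inner ℂ (Complex.I • f) x : ℂ).re
            = (inner ℂ (Complex.I • f) (Tadj (T x)) : ℂ).re := by rw [hΔx']
          _ = (inner ℂ (Tadj (T x)) (Complex.I • f) : ℂ).re := reSwap _ _
          _ = (inner ℂ (T x) (T (Complex.I • f)) : ℂ).re := hTadj _ _
          _ = (inner ℂ (T x) (-(Complex.I • T f)) : ℂ).re := by rw [hTJ]
          _ = -(inner ℂ (T x) (Complex.I • f) : ℂ).re := by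
              rw [hTf f hf, inner_neg_right, Complex.neg_re]
          _ = -(inner ℂ (Complex.I • f) (T x) : ℂ).re := by rw [reSwap]
      rw [e1]
      ring
    have hu0 : x + T x = 0 := by
      have : x + T x ∈ L ⊓ L' := ⟨huL, huL'⟩
      rw [hfac] at this
      simpa using this
    have hTx : T x = -x := by
      have hu0' : T x + x = 0 := by rw [add_comm]; exact hu0
      exact eq_neg_of_add_eq_zero_left hu0' 
    -- z = I • x lies in L ∩ L'
    have hzL : Complex.I • x ∈ L := by
      apply hfix
      rw [hTJ, hTx, smul_neg, neg_neg]
    have hΔz : Tadj (T (Complex.I • x)) = Complex.I • x := by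
      rw [← hΔ, hΔJ, hΔx]
    have hzL' : Complex.I • x ∈ L' := by
      rw [hL']
      intro f hf
      have e0 : (inner ℂ f (Complex.I • x) : ℂ).im
          = (inner ℂ (Complex.I • f) (Complex.I • x) : ℂ).re := (reIm _ _).symm
      have e1 : (inner ℂ (Complex.I • f) (Complex.I • x) : ℂ).re
          = -(inner ℂ (Complex.I • f) (Complex.I • x) : ℂ).re := by
        calc (inner ℂ (Complex.I • f) (Complex.I • x) : ℂ).re
            = (inner ℂ (Complex.I • f) (Tadj (T (Complex.I • x))) : ℂ).re := by rw [hΔz]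
          _ = (inner ℂ (Tadj (T (Complex.I • x))) (Complex.I • f) : ℂ).re := reSwap _ _
          _ = (inner ℂ (T (Complex.I • x)) (T (Complex.I • f)) : ℂ).re := hTadj _ _
          _ = (inner ℂ (T (Complex.I • x)) (-(Complex.I • f)) : ℂ).re := by
              rw [hTJ f, hTf f hf]
          _ = -(inner ℂ (T (Complex.I • x)) (Complex.I • f) : ℂ).re := by
              rw [inner_neg_right, Complex.neg_re]
          _ = -(inner ℂ (Complex.I • x) (Complex.I • f) : ℂ).re := by
              rw [hTJ, hTx, smul_neg, neg_neg]
          _ = -(inner ℂ (Complex.I • f) (Complex.I • x) : ℂ).re := by rw [reSwap]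
      rw [e0]
      linarith
    have hz0 : Complex.I • x = 0 := by
      have : Complex.I • x ∈ L ⊓ L' := ⟨hzL, hzL'⟩
      rw [hfac] at this
      simpa using this
    rcases smul_eq_zero.mp hz0 with h | h
    · exact absurd h Complex.I_ne_zero
    · exact h
  refine ⟨hΔJ, hsa, ?_, ?_, ?_⟩
  · -- positivity
    intro x hx
    have hre : (inner ℂ x (Δ x) : ℂ).re = (inner ℂ (T x) (T x) : ℂ).re := by
      rw [reSwap, hΔ, hTadj]
    have hTx : T x ≠ 0 := by
      intro h
      apply hx
      have := hTT x
      rw [h, map_zero] at this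
      exact this.symm
    have h2 : RCLike.re (inner ℂ (T x) (T x) : ℂ) = ‖T x‖ ^ 2 := inner_self_eq_norm_sq (T x)
    rw [RCLike.re_to_complex] at h2
    rw [hre, h2]
    exact pow_pos (norm_pos_iff.mpr hTx) 2
  · -- bijectivity of 1 - Δ
    haveI : FiniteDimensional ℝ H := FiniteDimensional.trans ℝ ℂ H
    set φ : H →ₗ[ℝ] H := LinearMap.id - Δ with hφ
    have hφapp : ∀ x : H, φ x = x - Δ x := fun x => rfl
    have hinjφ : Function.Injective φ := by
      rw [← LinearMap.ker_eq_bot]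
      rw [LinearMap.ker_eq_bot']
      intro m hm
      exact hinj m (by rw [← hφapp]; exact hm)
    have hbij : Function.Bijective φ :=
      ⟨hinjφ, (LinearMap.injective_iff_surjective).mp hinjφ⟩
    exact hbij
  · -- the modular formula
    intro x
    rw [hQ]
    have h1 : P (x - Δ x) = x + T x := hPformula x
    have h2 : Complex.I • (x - Δ x) = Complex.I • x - Δ (Complex.I • x) := by
      rw [smul_sub, hΔJ]
    have h3 : P (Complex.I • (x - Δ x)) = Complex.I • x + T (Complex.I • x) := by
      rw [h2, hPformula]
    rw [h1, h3, hTJ]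
    have h4 : Complex.I • (Complex.I • x + -(Complex.I • T x))
        = -x + T x := by
      rw [smul_add, smul_neg, smul_smul, smul_smul, Complex.I_mul_I, neg_one_smul, neg_one_smul,
        neg_neg]
    rw [h4, hΔ]
    have h5 : x + T x - (-x + T x) - (x - Tadj (T x)) = x + Tadj (T x) := by abel
    rw [h5]
end

section
/- Let V be a nontrivial finite-dimensional real inner product space, S : V → V a symmetric positive-definite linear map, L ⊆ V a linear subspace, and χ : V → V the orthogonal projection onto L. Assume S²(L) ∩ L = {0} and S²(L^⊥) ∩ L^⊥ = {0}. Then the operator B := S∘χ∘S⁻¹ + S⁻¹∘χ∘S − 1 is symmetric (⟨Bu, v⟩ = ⟨u, Bv⟩ for all u, v), and ⟨v, B²v⟩ > ⟨v, v⟩ for every nonzero v ∈ V; equivalently, every eigenvalue λ of B satisfies |λ| > 1. -/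
local notation "⟪" x ", " y "⟫" => @inner ℝ _ _ x y

/-- For a finite-dimensional one-particle structure `(V, L, S²)` with
`S²(L) ∩ L = {0}` and `S²(L^⊥) ∩ L^⊥ = {0}`, the operator
`B = SχS⁻¹ + S⁻¹χS - 1` is symmetric and satisfies `⟨v, B²v⟩ > ⟨v, v⟩` for `v ≠ 0`;
equivalently, every eigenvalue `λ` of `B` satisfies `|λ| > 1`. -/
theorem discretized_B_symmetric_and_spectrum_outside_unit_interval
    {V : Type*} [NormedAddCommGroup V] [InnerProductSpace ℝ V]
    [FiniteDimensional ℝ V] [Nontrivial V]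
    (S : V ≃ₗ[ℝ] V)
    -- `S` is symmetric and positive-definite
    (hSsym : ∀ u v : V, (inner ℝ (S u) v : ℝ) = inner ℝ u (S v))
    (hSpos : ∀ v : V, v ≠ 0 → 0 < (inner ℝ v (S v) : ℝ))
    (L : Submodule ℝ V)
    -- `χ` is the orthogonal projection onto `L`
    (χ : V →ₗ[ℝ] V) (hχ : ∀ v : V, χ v ∈ L ∧ v - χ v ∈ Lᗮ)
    -- `S²(L) ∩ L = {0}` and `S²(L^⊥) ∩ L^⊥ = {0}`
    (hL : L.map ((S : V →ₗ[ℝ] V) ∘ₗ (S : V →ₗ[ℝ] V)) ⊓ L = ⊥)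
    (hLperp : Lᗮ.map ((S : V →ₗ[ℝ] V) ∘ₗ (S : V →ₗ[ℝ] V)) ⊓ Lᗮ = ⊥)
    -- `B = SχS⁻¹ + S⁻¹χS - 1`
    (B : V → V) (hB : ∀ v : V, B v = S (χ (S.symm v)) + S.symm (χ (S v)) - v) :
    (∀ u v : V, (inner ℝ (B u) v : ℝ) = inner ℝ u (B v)) ∧
      (∀ v : V, v ≠ 0 → (inner ℝ v v : ℝ) < inner ℝ v (B (B v))) ∧
      (∀ (l : ℝ) (v : V), v ≠ 0 → B v = l • v → 1 < |l|) := by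
  have hχmem : ∀ v : V, χ v ∈ L := fun v => (hχ v).1
  have hperp : ∀ v : V, v - χ v ∈ Lᗮ := fun v => (hχ v).2
  have hperp0 : ∀ (w x : V), w ∈ L → ⟪w, x - χ x⟫ = 0 := fun w x hw =>
    (Submodule.mem_orthogonal L _).mp (hperp x) w hw
  have hχ_id : ∀ w : V, w ∈ L → χ w = w := by
    intro w hw
    have h0 : ⟪w - χ w, w - χ w⟫ = 0 :=
      hperp0 _ _ (Submodule.sub_mem L hw (hχmem w))
    have h1 : w - χ w = 0 := inner_self_eq_zero.mp h0
    have := sub_eq_zero.mp h1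
    exact this.symm
  have hχself : ∀ x y : V, ⟪χ x, y⟫ = ⟪x, χ y⟫ := by
    intro x y
    have h1 : ⟪χ x, y - χ y⟫ = 0 := hperp0 _ _ (hχmem x)
    have h2 : ⟪χ y, x - χ x⟫ = 0 := hperp0 _ _ (hχmem y)
    rw [inner_sub_right] at h1 h2
    have h3 : ⟪χ y, χ x⟫ = ⟪χ x, χ y⟫ := real_inner_comm _ _
    have h4 : ⟪x, χ y⟫ = ⟪χ y, x⟫ := real_inner_comm _ _
    linarith
  have hSsymm' : ∀ u w : V, ⟪S.symm u, w⟫ = ⟪u, S.symm w⟫ := by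
    intro u w
    have h := hSsym (S.symm u) (S.symm w)
    simp only [LinearEquiv.apply_symm_apply] at h
    exact h.symm
  -- symmetry of B
  have hsymB : ∀ u v : V, ⟪B u, v⟫ = ⟪u, B v⟫ := by
    intro u v
    have e1 : ⟪S (χ (S.symm u)), v⟫ = ⟪u, S.symm (χ (S v))⟫ := by
      rw [hSsym, hχself, hSsymm']
    have e2 : ⟪S.symm (χ (S u)), v⟫ = ⟪u, S (χ (S.symm v))⟫ := by
      rw [hSsymm', hχself, ← hSsym]
    rw [hB, hB, inner_sub_left, inner_add_left, inner_sub_right, inner_add_right,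
      e1, e2]
    ring
  -- the key identity: ⟪Bv, Bv⟫ = ⟪v, v⟫ + ‖SχS⁻¹v − S⁻¹χSv‖²
  have key : ∀ v : V, ⟪B v, B v⟫ =
      ⟪v, v⟫ + ⟪S (χ (S.symm v)) - S.symm (χ (S v)),
                S (χ (S.symm v)) - S.symm (χ (S v))⟫ := by
    intro v
    have hab : ⟪S (χ (S.symm v)), S.symm (χ (S v))⟫ = ⟪χ (S.symm v), χ (S v)⟫ := by
      rw [hSsym, LinearEquiv.apply_symm_apply]
    have h1 : ⟪S (χ (S.symm v)), v⟫ = ⟪χ (S.symm v), χ (S v)⟫ := by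
      rw [hSsym]
      have h := hperp0 (χ (S.symm v)) (S v) (hχmem _)
      rw [inner_sub_right] at h
      linarith
    have h2 : ⟪S.symm (χ (S v)), v⟫ = ⟪χ (S v), χ (S.symm v)⟫ := by
      rw [hSsymm']
      have h := hperp0 (χ (S v)) (S.symm v) (hχmem _)
      rw [inner_sub_right] at h
      linarith
    have hc1 : ⟪S.symm (χ (S v)), S (χ (S.symm v))⟫
        = ⟪S (χ (S.symm v)), S.symm (χ (S v))⟫ := real_inner_comm _ _
    have hc2 : ⟪v, S (χ (S.symm v))⟫ = ⟪S (χ (S.symm v)), v⟫ := real_inner_comm _ _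
    have hc3 : ⟪v, S.symm (χ (S v))⟫ = ⟪S.symm (χ (S v)), v⟫ := real_inner_comm _ _
    have hc4 : ⟪χ (S v), χ (S.symm v)⟫ = ⟪χ (S.symm v), χ (S v)⟫ := real_inner_comm _ _
    rw [hB]
    simp only [inner_sub_left, inner_sub_right, inner_add_left, inner_add_right]
    rw [hab, h1, h2, hc1, hc2, hc3, hc4, hab, h1, h2]
    linarith [hc4]
  -- strict positivity
  have hpos : ∀ v : V, v ≠ 0 → ⟪v, v⟫ < ⟪B v, B v⟫ := by
    intro v hv
    rw [key v]
    have hw : S (χ (S.symm v)) - S.symm (χ (S v)) ≠ 0 := by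
      intro h
      have heq0 : S (χ (S.symm v)) = S.symm (χ (S v)) := sub_eq_zero.mp h
      have heq : S (S (χ (S.symm v))) = χ (S v) := by
        rw [heq0, LinearEquiv.apply_symm_apply]
      have hmem : χ (S v) ∈ L.map ((S : V →ₗ[ℝ] V) ∘ₗ (S : V →ₗ[ℝ] V)) ⊓ L := by
        refine ⟨⟨χ (S.symm v), hχmem _, ?_⟩, hχmem _⟩
        simpa using heq
      rw [hL] at hmem
      have ha0 : χ (S v) = 0 := (Submodule.mem_bot ℝ).mp hmem
      have hb0 : χ (S.symm v) = 0 := by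
        have h' : S (S (χ (S.symm v))) = 0 := by rw [heq, ha0]
        have h'' : S (χ (S.symm v)) = 0 := by
          exact (LinearEquiv.map_eq_zero_iff S).mp h'
        exact (LinearEquiv.map_eq_zero_iff S).mp h''
      have h5 : S v ∈ Lᗮ := by
        have := hperp (S v); rwa [ha0, sub_zero] at this
      have h6 : S.symm v ∈ Lᗮ := by
        have := hperp (S.symm v); rwa [hb0, sub_zero] at this
      have hmem2 : S v ∈ Lᗮ.map ((S : V →ₗ[ℝ] V) ∘ₗ (S : V →ₗ[ℝ] V)) ⊓ Lᗮ := by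
        refine ⟨⟨S.symm v, h6, ?_⟩, h5⟩
        simp
      rw [hLperp] at hmem2
      have hSv0 : S v = 0 := (Submodule.mem_bot ℝ).mp hmem2
      exact hv ((LinearEquiv.map_eq_zero_iff S).mp hSv0)
    have hposw : (0:ℝ) < ⟪S (χ (S.symm v)) - S.symm (χ (S v)),
        S (χ (S.symm v)) - S.symm (χ (S v))⟫ :=
      lt_of_le_of_ne real_inner_self_nonneg (Ne.symm (inner_self_ne_zero.mpr hw))
    linarith
  refine ⟨hsymB, ?_, ?_⟩
  · intro v hv
    have h := hsymB v (B v)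
    have := hpos v hv
    linarith [h, this]
  · intro l v hv hlv
    have h3 := hpos v hv
    rw [hlv, real_inner_smul_left, real_inner_smul_right] at h3
    have h4 : (0:ℝ) < ⟪v, v⟫ :=
      lt_of_le_of_ne real_inner_self_nonneg (Ne.symm (inner_self_ne_zero.mpr hv))
    by_contra hcon
    push_neg at hcon
    have h5 : l * l ≤ 1 := by
      nlinarith [abs_mul_abs_self l, abs_nonneg l]
    nlinarith [h3, h4, h5]
end

section
/- Let f : ℝ → ℝ be measurable and Lebesgue integrable on [0, b₂ − a₁], where a₁ < b₁ ≤ a₂ < b₂ are real numbers, and define F(x) := x·∫₀ˣ f(t) dt − ∫₀ˣ t·f(t) dt for x ∈ [0, b₂ − a₁]. Then the double integral of f(y − x) over the rectangle [a₁, b₁] × [a₂, b₂] satisfies ∫_{a₂}^{b₂} ∫_{a₁}^{b₁} f(y − x) dx dy = F(b₂ − a₁) − F(b₂ − b₁) − F(a₂ − a₁) + F(a₂ − b₁). -/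
open MeasureTheory intervalIntegral

/-- The second antiderivative formula: `∫₀ˣ (∫₀ᵘ f) du = x·∫₀ˣ f − ∫₀ˣ t f(t) dt`. -/
lemma second_primitive_eq (x : ℝ) (hx : 0 ≤ x) (f : ℝ → ℝ) (hfm : Measurable f)
    (hfi : IntegrableOn f (Set.Icc 0 x)) :
    ∫ u in (0:ℝ)..x, (∫ t in (0:ℝ)..u, f t) =
      x * (∫ t in (0:ℝ)..x, f t) - ∫ t in (0:ℝ)..x, t * f t := by
  have hfi' : IntegrableOn f (Set.Ioc 0 x) := hfi.mono_set Set.Ioc_subset_Icc_self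
  set μ := volume.restrict (Set.Ioc (0:ℝ) x) with hμ
  set K : ℝ → ℝ → ℝ := fun u t => if t ≤ u then f t else 0 with hK
  have hKmeas : Measurable (Function.uncurry K) := by
    have : Function.uncurry K = fun p : ℝ × ℝ =>
        Set.indicator {p : ℝ × ℝ | p.2 ≤ p.1} (fun p => f p.2) p := by
      ext p
      simp [Function.uncurry, Set.indicator, hK]
    rw [this]
    exact (hfm.comp measurable_snd).indicator (measurableSet_le measurable_snd measurable_fst)
  -- Integrability of the kernel on the product
  have hKint : Integrable (Function.uncurry K) (μ.prod μ) := by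
    refine (integrable_prod_iff hKmeas.aestronglyMeasurable).2 ⟨?_, ?_⟩
    · refine Filter.Eventually.of_forall fun u => ?_
      show Integrable (fun t => K u t) μ
      have : (fun t => K u t) = Set.indicator (Set.Iic u) f := by
        ext t; simp [hK, Set.indicator, Set.mem_Iic]
      rw [this]
      exact hfi'.indicator measurableSet_Iic
    · have hmeas : StronglyMeasurable fun u => ∫ t, ‖K u t‖ ∂μ := by
        apply StronglyMeasurable.integral_prod_right
        exact (hKmeas.norm).stronglyMeasurable
      refine Integrable.mono' (g := fun _ => ∫ t, ‖f t‖ ∂μ) ?_ hmeas.aestronglyMeasurable ?_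
      · exact integrableOn_const measure_Ioc_lt_top.ne
      · refine Filter.Eventually.of_forall fun u => ?_
        rw [Real.norm_eq_abs, abs_of_nonneg (integral_nonneg fun t => norm_nonneg _)]
        refine integral_mono_of_nonneg (Filter.Eventually.of_forall fun t => norm_nonneg _)
          hfi'.norm (Filter.Eventually.of_forall fun t => ?_)
        simp only [Function.uncurry, hK]
        split_ifs <;> simp [abs_nonneg]
  -- rewrite LHS as a double set integral
  rw [intervalIntegral.integral_of_le hx]
  have hinner : ∀ u ∈ Set.Ioc (0:ℝ) x, (∫ t in (0:ℝ)..u, f t) = ∫ t, K u t ∂μ := by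
    intro u hu
    have : (fun t => K u t) = Set.indicator (Set.Iic u) f := by
      ext t; simp [hK, Set.indicator, Set.mem_Iic]
    rw [intervalIntegral.integral_of_le hu.1.le, hμ, this,
      setIntegral_indicator measurableSet_Iic, Set.Ioc_inter_Iic, min_eq_right hu.2]
  rw [setIntegral_congr_fun measurableSet_Ioc hinner]
  have hswap : ∫ u, (∫ t, K u t ∂μ) ∂μ = ∫ t, (∫ u, K u t ∂μ) ∂μ :=
    integral_integral_swap hKint
  rw [hswap]
  -- compute the inner integral
  have hinner2 : ∀ t ∈ Set.Ioc (0:ℝ) x, (∫ u, K u t ∂μ) = (x - t) * f t := by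
    intro t ht
    have : (fun u => K u t) = Set.indicator (Set.Ici t) (fun _ => f t) := by
      ext u; simp [hK, Set.indicator, Set.mem_Ici]
    have hset : Set.Ioc (0:ℝ) x ∩ Set.Ici t = Set.Icc t x := by
      ext u
      simp only [Set.mem_inter_iff, Set.mem_Ioc, Set.mem_Ici, Set.mem_Icc]
      constructor
      · rintro ⟨⟨_, hux⟩, htu⟩; exact ⟨htu, hux⟩
      · rintro ⟨htu, hux⟩; exact ⟨⟨lt_of_lt_of_le ht.1 htu, hux⟩, htu⟩
    rw [hμ, this, setIntegral_indicator measurableSet_Ici, hset, setIntegral_const,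
      measureReal_def, Real.volume_Icc, smul_eq_mul, ENNReal.toReal_ofReal (by linarith [ht.2])]
  rw [setIntegral_congr_fun measurableSet_Ioc hinner2]
  -- linearity
  have htfi : IntegrableOn (fun t => t * f t) (Set.Ioc 0 x) := by
    refine Integrable.mono' (hfi'.norm.const_mul x) ((measurable_id.mul hfm).aestronglyMeasurable)
      ?_
    rw [ae_restrict_iff' measurableSet_Ioc]
    refine Filter.Eventually.of_forall fun t ht => ?_
    rw [Real.norm_eq_abs, abs_mul, abs_of_pos ht.1]
    exact mul_le_mul_of_nonneg_right ht.2 (abs_nonneg _)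
  have heq : ∀ t ∈ Set.Ioc (0:ℝ) x, (x - t) * f t = x * f t - t * f t := by
    intro t _; ring
  rw [setIntegral_congr_fun measurableSet_Ioc heq,
    integral_sub (hfi'.const_mul x) htfi, MeasureTheory.integral_const_mul,
    intervalIntegral.integral_of_le hx, intervalIntegral.integral_of_le hx]

/-- Off-diagonal box-basis matrix element of a convolution kernel: for `a₁ < b₁ ≤ a₂ < b₂`
and `f` integrable on `[0, b₂ - a₁]`, with `F(x) = x·∫₀ˣ f - ∫₀ˣ t f(t) dt`,
`∫_{a₂}^{b₂} ∫_{a₁}^{b₁} f(y - x) dx dy = F(b₂-a₁) - F(b₂-b₁) - F(a₂-a₁) + F(a₂-b₁)`. -/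
theorem box_matrix_element_off_diagonal
    (a₁ b₁ a₂ b₂ : ℝ) (h₁ : a₁ < b₁) (h₂ : b₁ ≤ a₂) (h₃ : a₂ < b₂)
    (f : ℝ → ℝ) (hfm : Measurable f)
    (hfi : IntegrableOn f (Set.Icc 0 (b₂ - a₁)))
    (F : ℝ → ℝ)
    (hF : ∀ x ∈ Set.Icc 0 (b₂ - a₁),
      F x = x * (∫ t in (0:ℝ)..x, f t) - ∫ t in (0:ℝ)..x, t * f t) :
    (∫ y in a₂..b₂, ∫ x in a₁..b₁, f (y - x)) =
      F (b₂ - a₁) - F (b₂ - b₁) - F (a₂ - a₁) + F (a₂ - b₁) := by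
  set L := b₂ - a₁ with hL
  have hL0 : 0 ≤ L := by simp [hL]; linarith
  set g : ℝ → ℝ := fun u => ∫ t in (0:ℝ)..u, f t with hg
  have hfint : ∀ d, 0 ≤ d → d ≤ L → IntervalIntegrable f volume 0 d := by
    intro d h1 h2
    have : IntegrableOn f (Set.Icc 0 d) := hfi.mono_set (Set.Icc_subset_Icc le_rfl h2)
    exact (this.mono_set (by rw [Set.uIcc_of_le h1])).intervalIntegrable
  have hg_cont : ContinuousOn g (Set.Icc 0 L) := by
    have := intervalIntegral.continuousOn_primitive_interval (a := (0:ℝ)) (b := L) (μ := volume)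
      (f := f) (by rwa [Set.uIcc_of_le hL0])
    rwa [Set.uIcc_of_le hL0] at this
  -- F agrees with the integral of g
  have hFg : ∀ d, 0 ≤ d → d ≤ L → F d = ∫ u in (0:ℝ)..d, g u := by
    intro d h1 h2
    rw [hF d ⟨h1, h2⟩, ← second_primitive_eq d h1 f hfm
      (hfi.mono_set (Set.Icc_subset_Icc le_rfl h2))]
  -- step: the primitive-of-g computation
  have step : ∀ c, a₁ ≤ c → c ≤ b₁ → (∫ y in a₂..b₂, g (y - c)) = F (b₂ - c) - F (a₂ - c) := by
    intro c hc1 hc2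
    have h0a : 0 ≤ a₂ - c := by linarith
    have h0b : 0 ≤ b₂ - c := by linarith
    have hbL : b₂ - c ≤ L := by simp [hL]; linarith
    have haL : a₂ - c ≤ L := by simp [hL]; linarith
    have hgi : ∀ d, 0 ≤ d → d ≤ L → IntervalIntegrable g volume 0 d := by
      intro d hd1 hd2
      exact ((hg_cont.mono (Set.Icc_subset_Icc le_rfl hd2)).mono
        (by rw [Set.uIcc_of_le hd1])).intervalIntegrable
    rw [intervalIntegral.integral_comp_sub_right (fun u => g u) c,
      ← intervalIntegral.integral_interval_sub_left (hgi _ h0b hbL) (hgi _ h0a haL),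
      hFg _ h0b hbL, hFg _ h0a haL]
  -- inner integral
  have inner : ∀ y ∈ Set.uIcc a₂ b₂, (∫ x in a₁..b₁, f (y - x)) = g (y - a₁) - g (y - b₁) := by
    intro y hy
    rw [Set.uIcc_of_le h₃.le] at hy
    have h1 : 0 ≤ y - b₁ := by linarith [hy.1]
    have h2 : y - a₁ ≤ L := by simp [hL]; linarith [hy.2]
    have h3 : y - b₁ ≤ L := by simp [hL]; linarith [hy.2]
    have h0 : 0 ≤ y - a₁ := by linarith [hy.1]
    rw [intervalIntegral.integral_comp_sub_left f y, hg]
    exact (intervalIntegral.integral_interval_sub_left (hfint _ h0 h2) (hfint _ h1 h3)).symm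
  rw [intervalIntegral.integral_congr inner]
  have hgc : ∀ c, a₁ ≤ c → c ≤ b₁ → IntervalIntegrable (fun y => g (y - c)) volume a₂ b₂ := by
    intro c hc1 hc2
    apply ContinuousOn.intervalIntegrable
    apply hg_cont.comp (Continuous.continuousOn (by continuity))
    intro y hy
    rw [Set.uIcc_of_le h₃.le] at hy
    constructor
    · simp only; linarith [hy.1]
    · simp only [hL]; linarith [hy.2]
  rw [intervalIntegral.integral_sub (hgc a₁ le_rfl h₁.le) (hgc b₁ h₁.le le_rfl),
    step a₁ le_rfl h₁.le, step b₁ h₁.le le_rfl]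
  ring
end

section
/- Let a < b be real numbers and f : ℝ → ℝ measurable and Lebesgue integrable on [0, b − a], and define F(x) := x·∫₀ˣ f(t) dt − ∫₀ˣ t·f(t) dt for x ∈ [0, b − a]. Then ∫_{a}^{b} ∫_{a}^{b} f(|x − y|) dx dy = 2·F(b − a). -/
open MeasureTheory intervalIntegral

/-- Diagonal box-basis matrix element of a convolution kernel: for `a < b` and `f`
integrable on `[0, b - a]`, with `F(x) = x·∫₀ˣ f - ∫₀ˣ t f(t) dt`,
`∫_a^b ∫_a^b f(|x - y|) dx dy = 2 F(b - a)`. -/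
theorem box_matrix_element_diagonal
    (a b : ℝ) (hab : a < b)
    (f : ℝ → ℝ) (hfm : Measurable f)
    (hfi : IntegrableOn f (Set.Icc 0 (b - a)))
    (F : ℝ → ℝ)
    (hF : ∀ x ∈ Set.Icc 0 (b - a),
      F x = x * (∫ t in (0:ℝ)..x, f t) - ∫ t in (0:ℝ)..x, t * f t) :
    (∫ y in a..b, ∫ x in a..b, f |x - y|) = 2 * F (b - a) := by
  set c := b - a with hcdef
  have hc0 : 0 < c := sub_pos.mpr hab
  set G : ℝ → ℝ := fun x => ∫ t in (0:ℝ)..x, f t with hGdef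
  have hfint : ∀ x ∈ Set.Icc (0:ℝ) c, IntervalIntegrable f volume 0 x := by
    intro x hx
    rw [intervalIntegrable_iff_integrableOn_Icc_of_le hx.1]
    exact hfi.mono_set (Set.Icc_subset_Icc le_rfl hx.2)
  have hfc : IntervalIntegrable f volume 0 c := hfint c ⟨hc0.le, le_rfl⟩
  -- Step 1: inner integral
  have inner : ∀ y ∈ Set.Icc a b, (∫ x in a..b, f |x - y|) = G (y - a) + G (b - y) := by
    intro y hy
    have hya : (0:ℝ) ≤ y - a := by linarith [hy.1]
    have hby : (0:ℝ) ≤ b - y := by linarith [hy.2]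
    have h1 : IntervalIntegrable (fun x => f (y - x)) volume a y := by
      have := (hfint (y - a) ⟨hya, by linarith [hy.2]⟩).comp_sub_left y
      simpa using this.symm
    have h2 : IntervalIntegrable (fun x => f (x - y)) volume y b := by
      have := (hfint (b - y) ⟨hby, by linarith [hy.1]⟩).comp_sub_right y
      simpa using this
    have e1 : IntervalIntegrable (fun x => f |x - y|) volume a y := by
      rw [intervalIntegrable_iff_integrableOn_Icc_of_le hy.1]
      rw [intervalIntegrable_iff_integrableOn_Icc_of_le hy.1] at h1
      refine h1.congr_fun (fun x hx => ?_) measurableSet_Icc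
      rw [abs_sub_comm, abs_of_nonneg (by linarith [hx.2] : (0:ℝ) ≤ y - x)]
    have e2 : IntervalIntegrable (fun x => f |x - y|) volume y b := by
      rw [intervalIntegrable_iff_integrableOn_Icc_of_le hy.2]
      rw [intervalIntegrable_iff_integrableOn_Icc_of_le hy.2] at h2
      refine h2.congr_fun (fun x hx => ?_) measurableSet_Icc
      rw [abs_of_nonneg (by linarith [hx.1] : (0:ℝ) ≤ x - y)]
    rw [← integral_add_adjacent_intervals e1 e2]
    have A : (∫ x in a..y, f |x - y|) = G (y - a) := by
      rw [show (∫ x in a..y, f |x - y|) = ∫ x in a..y, f (y - x) from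
        integral_congr fun x hx => by
          rw [Set.uIcc_of_le hy.1] at hx
          rw [abs_sub_comm, abs_of_nonneg (by linarith [hx.2] : (0:ℝ) ≤ y - x)]]
      rw [integral_comp_sub_left f y, sub_self]
    have B : (∫ x in y..b, f |x - y|) = G (b - y) := by
      rw [show (∫ x in y..b, f |x - y|) = ∫ x in y..b, f (x - y) from
        integral_congr fun x hx => by
          rw [Set.uIcc_of_le hy.2] at hx
          rw [abs_of_nonneg (by linarith [hx.1] : (0:ℝ) ≤ x - y)]]
      rw [integral_comp_sub_right f y, sub_self]
    rw [A, B]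
  -- continuity of G on [0, c]
  have hGc : ContinuousOn G (Set.Icc 0 c) := by
    have h := intervalIntegral.continuousOn_primitive_interval (μ := volume) (a := 0) (b := c)
      (by rwa [Set.uIcc_of_le hc0.le])
    rwa [Set.uIcc_of_le hc0.le] at h
  -- Step 2: outer integral
  have i1 : IntervalIntegrable (fun y => G (y - a)) volume a b := by
    apply ContinuousOn.intervalIntegrable
    rw [Set.uIcc_of_le hab.le]
    exact hGc.comp (continuousOn_id.sub continuousOn_const)
      (fun y hy => ⟨by linarith [hy.1], by linarith [hy.2]⟩)
  have i2 : IntervalIntegrable (fun y => G (b - y)) volume a b := by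
    apply ContinuousOn.intervalIntegrable
    rw [Set.uIcc_of_le hab.le]
    exact hGc.comp (continuousOn_const.sub continuousOn_id)
      (fun y hy => ⟨by linarith [hy.2], by linarith [hy.1]⟩)
  have outer : (∫ y in a..b, ∫ x in a..b, f |x - y|) = 2 * ∫ u in (0:ℝ)..c, G u := by
    rw [integral_congr (g := fun y => G (y - a) + G (b - y))
      (fun y hy => inner y (by rwa [Set.uIcc_of_le hab.le] at hy))]
    rw [integral_add i1 i2, integral_comp_sub_right G a, integral_comp_sub_left G b,
      sub_self, sub_self]
    ring
  -- Step 3: Fubini for the primitive of the primitive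
  have key : (∫ u in (0:ℝ)..c, G u)
      = c * (∫ t in (0:ℝ)..c, f t) - ∫ t in (0:ℝ)..c, t * f t := by
    set μ := volume.restrict (Set.Ioc (0:ℝ) c) with hμ
    have hfin : IsFiniteMeasure μ := by
      constructor
      rw [hμ, Measure.restrict_apply_univ, Real.volume_Ioc]
      exact ENNReal.ofReal_lt_top
    set g : ℝ → ℝ → ℝ := fun u t => (Set.Ioc (0:ℝ) u).indicator f t with hgdef
    have hS : MeasurableSet {p : ℝ × ℝ | p.2 ∈ Set.Ioc 0 p.1} := by
      apply MeasurableSet.inter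
      · exact measurableSet_lt measurable_const measurable_snd
      · exact measurableSet_le measurable_snd measurable_fst
    have hunc : Function.uncurry g
        = Set.indicator {p : ℝ × ℝ | p.2 ∈ Set.Ioc 0 p.1} (fun p => f p.2) := by
      funext p
      simp [hgdef, Function.uncurry, Set.indicator_apply]
    have h0 : Integrable (fun p : ℝ × ℝ => f p.2) (μ.prod μ) := by
      refine (integrable_prod_iff ?_).mpr ⟨?_, ?_⟩
      · exact (hfm.comp measurable_snd).aestronglyMeasurable
      · exact Filter.Eventually.of_forall fun x =>
          (hfi.mono_set Set.Ioc_subset_Icc_self)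
      · simp only
        exact integrable_const _
    have hgint : Integrable (Function.uncurry g) (μ.prod μ) := by
      refine h0.norm.mono' ?_ ?_
      · rw [hunc]
        exact (Measurable.indicator (hfm.comp measurable_snd) hS).aestronglyMeasurable
      · refine Filter.Eventually.of_forall fun p => ?_
        rw [hunc]
        exact norm_indicator_le_norm_self _ _
    have step1 : (∫ u in (0:ℝ)..c, G u) = ∫ u, (∫ t, g u t ∂μ) ∂μ := by
      rw [integral_of_le hc0.le]
      refine setIntegral_congr_fun measurableSet_Ioc fun u hu => ?_
      rw [hGdef]
      simp only
      rw [integral_of_le hu.1.le, hμ, setIntegral_indicator measurableSet_Ioc,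
        Set.Ioc_inter_Ioc, max_self, min_eq_right hu.2]
    have step2 : (∫ t, (∫ u, g u t ∂μ) ∂μ) = ∫ t in Set.Ioc (0:ℝ) c, (c - t) * f t := by
      refine setIntegral_congr_fun measurableSet_Ioc fun t ht => ?_
      have : (fun u => g u t) = fun u => (Set.Ici t).indicator (fun _ => f t) u := by
        funext u
        simp [hgdef, Set.indicator_apply, Set.mem_Ioc, Set.mem_Ici, ht.1]
      rw [this, hμ, setIntegral_indicator measurableSet_Ici]
      have hset : Set.Ioc 0 c ∩ Set.Ici t = Set.Icc t c := by
        ext u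
        constructor
        · rintro ⟨⟨_, h2⟩, h3⟩; exact ⟨h3, h2⟩
        · rintro ⟨h3, h2⟩; exact ⟨⟨lt_of_lt_of_le ht.1 h3, h2⟩, h3⟩
      rw [hset, setIntegral_const, measureReal_def, Real.volume_Icc, smul_eq_mul,
        ENNReal.toReal_ofReal (by linarith [ht.2] : (0:ℝ) ≤ c - t)]
    have htf : IntervalIntegrable (fun t => t * f t) volume 0 c := by
      have := hfc.continuousOn_mul (g := fun x => x) continuousOn_id
      simpa using this
    have step3 : (∫ t in Set.Ioc (0:ℝ) c, (c - t) * f t)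
        = c * (∫ t in (0:ℝ)..c, f t) - ∫ t in (0:ℝ)..c, t * f t := by
      rw [← integral_of_le hc0.le]
      have : (∫ t in (0:ℝ)..c, (c - t) * f t)
          = ∫ t in (0:ℝ)..c, (c * f t - t * f t) := by
        apply integral_congr; intro x _; ring
      rw [this, integral_sub (hfc.const_mul c) htf, intervalIntegral.integral_const_mul]
    rw [step1, integral_integral_swap hgint, step2, step3]
  rw [outer, key, hF c ⟨hc0.le, le_rfl⟩]
end

section
/- Let σ > 0 and μ ∈ ℝ, and let h : ℝ → ℝ be the normalized Gaussian h(x) = (πσ²)^{−1/4} · exp(−(x−μ)²/(2σ²)). Then ∫_ℝ 2π·min(1 − x, 1 + x)·h(x)² dx = 2π·(1 − μ·erf(μ/σ)) − 2σ·√π·exp(−μ²/σ²), where erf(z) := (2/√π)·∫₀ᶻ exp(−t²) dt is the Gaussian error function. -/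
open MeasureTheory Real intervalIntegral Filter Topology Set

namespace GaussRefAux

noncomputable def Phi (u : ℝ) : ℝ := ∫ t in (0:ℝ)..u, Real.exp (-t ^ 2)

lemma cont_gauss : Continuous fun t : ℝ => Real.exp (-t ^ 2) := by continuity

lemma phi_hasDerivAt (u : ℝ) : HasDerivAt Phi (Real.exp (-u ^ 2)) u :=
  (cont_gauss.integral_hasStrictDerivAt 0 u).hasDerivAt

lemma int_gauss : Integrable fun t : ℝ => Real.exp (-t ^ 2) := by
  have := integrable_exp_neg_mul_sq (b := 1) one_pos
  simpa using this

lemma integral_gauss_line : (∫ t : ℝ, Real.exp (-t ^ 2)) = Real.sqrt π := by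
  have := integral_gaussian 1
  simpa using this

lemma integral_gauss_Ioi : (∫ t in Ioi (0:ℝ), Real.exp (-t ^ 2)) = Real.sqrt π / 2 := by
  have := integral_gaussian_Ioi 1
  simpa using this

lemma integral_gauss_Iic : (∫ t in Iic (0:ℝ), Real.exp (-t ^ 2)) = Real.sqrt π / 2 := by
  have h := integral_Iic_add_Ioi (b := (0:ℝ)) int_gauss.integrableOn int_gauss.integrableOn
  rw [integral_gauss_Ioi, integral_gauss_line] at h
  linarith

lemma phi_tendsto_atTop : Tendsto Phi atTop (𝓝 (Real.sqrt π / 2)) := by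
  have h := intervalIntegral_tendsto_integral_Ioi 0 int_gauss.integrableOn
    (tendsto_id (x := atTop (α := ℝ)))
  rw [integral_gauss_Ioi] at h
  exact h

lemma phi_tendsto_atBot : Tendsto Phi atBot (𝓝 (-(Real.sqrt π / 2))) := by
  have h := intervalIntegral_tendsto_integral_Iic 0 int_gauss.integrableOn
    (tendsto_id (x := atBot (α := ℝ)))
  rw [integral_gauss_Iic] at h
  have h2 := h.neg
  refine h2.congr fun u => ?_
  show -(∫ t in u..(0:ℝ), Real.exp (-t ^ 2)) = Phi u
  rw [intervalIntegral.integral_symm, neg_neg]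
  rfl

lemma phi_neg (z : ℝ) : Phi (-z) = -Phi z := by
  unfold Phi
  have h1 : (∫ t in (0:ℝ)..(-z), Real.exp (-t ^ 2))
      = ∫ t in (0:ℝ)..(-z), Real.exp (-(-t) ^ 2) := by
    refine intervalIntegral.integral_congr fun t _ => ?_
    ring_nf
  rw [h1, intervalIntegral.integral_comp_neg fun t => Real.exp (-t ^ 2), neg_neg, neg_zero,
    intervalIntegral.integral_symm]

noncomputable def Eg (σ μ : ℝ) : ℝ → ℝ := fun x => Real.exp (-(x - μ) ^ 2 / σ ^ 2)

variable {σ μ : ℝ}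

lemma intE (hσ : 0 < σ) : Integrable (Eg σ μ) := by
  have h0 := (integrable_exp_neg_mul_sq (b := (σ ^ 2)⁻¹) (by positivity)).comp_sub_right μ
  have heq : (fun x : ℝ => Real.exp (-(σ ^ 2)⁻¹ * (x - μ) ^ 2)) = Eg σ μ := by
    funext x; unfold Eg; congr 1; ring
  rwa [heq] at h0

lemma intxE (hσ : 0 < σ) : Integrable fun x => (x - μ) * Eg σ μ x := by
  have h0 := (integrable_mul_exp_neg_mul_sq (b := (σ ^ 2)⁻¹) (by positivity)).comp_sub_right μ
  have heq : (fun x : ℝ => (x - μ) * Real.exp (-(σ ^ 2)⁻¹ * (x - μ) ^ 2))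
      = fun x => (x - μ) * Eg σ μ x := by
    funext x; unfold Eg; congr 2; ring
  rwa [heq] at h0

lemma int1subE (hσ : 0 < σ) : Integrable fun x => (1 - x) * Eg σ μ x := by
  have heq : (fun x => (1 - x) * Eg σ μ x)
      = fun x => (1 - μ) * Eg σ μ x - (x - μ) * Eg σ μ x := by
    funext x; ring
  rw [heq]
  exact ((intE hσ).const_mul _).sub (intxE hσ)

lemma int1addE (hσ : 0 < σ) : Integrable fun x => (1 + x) * Eg σ μ x := by
  have heq : (fun x => (1 + x) * Eg σ μ x)
      = fun x => (1 + μ) * Eg σ μ x + (x - μ) * Eg σ μ x := by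
    funext x; ring
  rw [heq]
  exact ((intE hσ).const_mul _).add (intxE hσ)

lemma phicomp_deriv (hσ : 0 < σ) (x : ℝ) :
    HasDerivAt (fun x => Phi ((x - μ) / σ)) (Eg σ μ x * σ⁻¹) x := by
  have hinner : HasDerivAt (fun x : ℝ => (x - μ) / σ) σ⁻¹ x := by
    simpa [one_div] using ((hasDerivAt_id x).sub_const μ).div_const σ
  have h := (phi_hasDerivAt ((x - μ) / σ)).comp x hinner
  have hval : Real.exp (-((x - μ) / σ) ^ 2) = Eg σ μ x := by
    unfold Eg; congr 1; field_simp
  rw [hval] at h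
  exact h

lemma Ederiv (x : ℝ) :
    HasDerivAt (Eg σ μ) (Eg σ μ x * (-2 * (x - μ) / σ ^ 2)) x := by
  have h1 : HasDerivAt (fun x : ℝ => (x - μ) ^ 2) (2 * (x - μ)) x := by
    have h := ((hasDerivAt_id x).sub_const μ).pow 2
    simp at h
    exact h
  have hin : HasDerivAt (fun x : ℝ => -(x - μ) ^ 2 / σ ^ 2) (-2 * (x - μ) / σ ^ 2) x := by
    have := (h1.neg).div_const (σ ^ 2)
    exact this.congr_deriv (by ring)
  exact hin.exp

lemma E_tendsto_atTop (hσ : 0 < σ) : Tendsto (Eg σ μ) atTop (𝓝 0) := by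
  have hsub : Tendsto (fun x : ℝ => x - μ) atTop atTop := by
    simpa [sub_eq_add_neg] using tendsto_atTop_add_const_right atTop (-μ) tendsto_id
  have harg : Tendsto (fun x : ℝ => (x - μ) ^ 2 / σ ^ 2) atTop atTop :=
    Tendsto.atTop_div_const (by positivity)
      (((tendsto_pow_atTop two_ne_zero).comp hsub).congr fun x => by simp [Function.comp])
  have := Real.tendsto_exp_neg_atTop_nhds_zero.comp harg
  refine this.congr fun x => ?_
  simp [Function.comp, Eg, neg_div]

lemma E_tendsto_atBot (hσ : 0 < σ) : Tendsto (Eg σ μ) atBot (𝓝 0) := by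
  have hsub : Tendsto (fun x : ℝ => x - μ) atBot atBot := by
    simpa [sub_eq_add_neg] using tendsto_atBot_add_const_right atBot (-μ) tendsto_id
  have habs : Tendsto (fun x : ℝ => |x - μ|) atBot atTop :=
    tendsto_abs_atBot_atTop.comp hsub
  have harg : Tendsto (fun x : ℝ => (x - μ) ^ 2 / σ ^ 2) atBot atTop :=
    Tendsto.atTop_div_const (by positivity)
      (((tendsto_pow_atTop two_ne_zero).comp habs).congr fun x => by
        simp [Function.comp, sq_abs])
  have := Real.tendsto_exp_neg_atTop_nhds_zero.comp harg
  refine this.congr fun x => ?_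
  simp [Function.comp, Eg, neg_div]

lemma arg_tendsto_atTop (hσ : 0 < σ) : Tendsto (fun x : ℝ => (x - μ) / σ) atTop atTop := by
  refine Tendsto.atTop_div_const hσ ?_
  simpa [sub_eq_add_neg] using tendsto_atTop_add_const_right atTop (-μ) tendsto_id

lemma arg_tendsto_atBot (hσ : 0 < σ) : Tendsto (fun x : ℝ => (x - μ) / σ) atBot atBot := by
  refine Tendsto.atBot_div_const hσ ?_
  simpa [sub_eq_add_neg] using tendsto_atBot_add_const_right atBot (-μ) tendsto_id

lemma S2 (hσ : 0 < σ) :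
    (∫ x in Ioi (0:ℝ), (1 - x) * Eg σ μ x)
      = (1 - μ) * σ * (Real.sqrt π / 2 + Phi (μ / σ))
        - σ ^ 2 / 2 * Real.exp (-μ ^ 2 / σ ^ 2) := by
  have hσ0 : σ ≠ 0 := ne_of_gt hσ
  set G : ℝ → ℝ := fun x => (1 - μ) * σ * Phi ((x - μ) / σ) + σ ^ 2 / 2 * Eg σ μ x with hG
  have hderiv : ∀ x ∈ Ici (0:ℝ), HasDerivAt G ((1 - x) * Eg σ μ x) x := by
    intro x _
    have h := ((phicomp_deriv (μ := μ) hσ x).const_mul ((1 - μ) * σ)).add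
      ((Ederiv (σ := σ) (μ := μ) x).const_mul (σ ^ 2 / 2))
    refine HasDerivAt.congr_deriv (f := G) h ?_
    field_simp
    ring
  have htop : Tendsto G atTop (𝓝 ((1 - μ) * σ * (Real.sqrt π / 2) + σ ^ 2 / 2 * 0)) := by
    exact ((phi_tendsto_atTop.comp (arg_tendsto_atTop hσ)).const_mul _).add
      ((E_tendsto_atTop hσ).const_mul _)
  have hint : IntegrableOn (fun x => (1 - x) * Eg σ μ x) (Ioi (0:ℝ)) :=
    (int1subE hσ).integrableOn
  have hres := integral_Ioi_of_hasDerivAt_of_tendsto' hderiv hint htop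
  rw [hres, hG]
  have h0 : ((0:ℝ) - μ) / σ = -(μ / σ) := by ring
  have hE0 : Eg σ μ 0 = Real.exp (-μ ^ 2 / σ ^ 2) := by
    unfold Eg; congr 1; ring
  simp only [h0, phi_neg, hE0]
  ring

lemma S1 (hσ : 0 < σ) :
    (∫ x in Iic (0:ℝ), (1 + x) * Eg σ μ x)
      = (1 + μ) * σ * (Real.sqrt π / 2 - Phi (μ / σ))
        - σ ^ 2 / 2 * Real.exp (-μ ^ 2 / σ ^ 2) := by
  have hσ0 : σ ≠ 0 := ne_of_gt hσ
  set G : ℝ → ℝ := fun x => (1 + μ) * σ * Phi ((x - μ) / σ) - σ ^ 2 / 2 * Eg σ μ x with hG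
  have hderiv : ∀ x ∈ Iic (0:ℝ), HasDerivAt G ((1 + x) * Eg σ μ x) x := by
    intro x _
    have h := ((phicomp_deriv (μ := μ) hσ x).const_mul ((1 + μ) * σ)).sub
      ((Ederiv (σ := σ) (μ := μ) x).const_mul (σ ^ 2 / 2))
    refine HasDerivAt.congr_deriv (f := G) h ?_
    field_simp
    ring
  have hbot : Tendsto G atBot (𝓝 ((1 + μ) * σ * (-(Real.sqrt π / 2)) - σ ^ 2 / 2 * 0)) := by
    exact ((phi_tendsto_atBot.comp (arg_tendsto_atBot hσ)).const_mul _).sub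
      ((E_tendsto_atBot hσ).const_mul _)
  have hint : IntegrableOn (fun x => (1 + x) * Eg σ μ x) (Iic (0:ℝ)) :=
    (int1addE hσ).integrableOn
  have hres := integral_Iic_of_hasDerivAt_of_tendsto' hderiv hint hbot
  rw [hres, hG]
  have h0 : ((0:ℝ) - μ) / σ = -(μ / σ) := by ring
  have hE0 : Eg σ μ 0 = Real.exp (-μ ^ 2 / σ ^ 2) := by
    unfold Eg; congr 1; ring
  simp only [h0, phi_neg, hE0]
  ring

lemma main_integral (hσ : 0 < σ) :
    (∫ x : ℝ, min (1 - x) (1 + x) * Eg σ μ x)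
      = σ * Real.sqrt π - 2 * μ * σ * Phi (μ / σ)
        - σ ^ 2 * Real.exp (-μ ^ 2 / σ ^ 2) := by
  have hEqIic : EqOn (fun x => (1 + x) * Eg σ μ x)
      (fun x => min (1 - x) (1 + x) * Eg σ μ x) (Iic (0:ℝ)) := by
    intro x hx
    have hx0 : x ≤ 0 := hx
    simp only []
    rw [min_eq_right (by linarith)]
  have hEqIoi : EqOn (fun x => (1 - x) * Eg σ μ x)
      (fun x => min (1 - x) (1 + x) * Eg σ μ x) (Ioi (0:ℝ)) := by
    intro x hx
    have hx0 : (0:ℝ) < x := hx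
    simp only []
    rw [min_eq_left (by linarith)]
  have hIntIic : IntegrableOn (fun x => min (1 - x) (1 + x) * Eg σ μ x) (Iic (0:ℝ)) :=
    ((int1addE hσ).integrableOn).congr_fun hEqIic measurableSet_Iic
  have hIntIoi : IntegrableOn (fun x => min (1 - x) (1 + x) * Eg σ μ x) (Ioi (0:ℝ)) :=
    ((int1subE hσ).integrableOn).congr_fun hEqIoi measurableSet_Ioi
  have hsplit := integral_Iic_add_Ioi (b := (0:ℝ)) hIntIic hIntIoi
  rw [← hsplit, ← setIntegral_congr_fun measurableSet_Iic hEqIic,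
    ← setIntegral_congr_fun measurableSet_Ioi hEqIoi, S1 hσ, S2 hσ]
  ring

end GaussRefAux

/-- Expectation value of the piecewise-linear reference multiplier `2π·min(1-x, 1+x)` in a
normalized Gaussian `h(x) = (πσ²)^{-1/4} exp(-(x-μ)²/(2σ²))`:
`∫ 2π·min(1-x, 1+x)·h(x)² dx = 2π(1 - μ·erf(μ/σ)) - 2σ√π·exp(-μ²/σ²)`,
where `erf(z) = (2/√π)·∫₀ᶻ exp(-t²) dt`. -/
theorem gaussian_expectation_piecewise_linear_reference
    (σ μ : ℝ) (hσ : 0 < σ) (h : ℝ → ℝ)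
    (hh : ∀ x : ℝ, h x = (π * σ ^ 2) ^ (-(1 : ℝ) / 4) * Real.exp (-(x - μ) ^ 2 / (2 * σ ^ 2)))
    (erf : ℝ → ℝ)
    (herf : ∀ z : ℝ, erf z = 2 / Real.sqrt π * ∫ t in (0:ℝ)..z, Real.exp (-t ^ 2)) :
    (∫ x : ℝ, 2 * π * min (1 - x) (1 + x) * (h x) ^ 2) =
      2 * π * (1 - μ * erf (μ / σ)) - 2 * σ * Real.sqrt π * Real.exp (-μ ^ 2 / σ ^ 2) := by
  have hσ0 : σ ≠ 0 := ne_of_gt hσ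
  have hs : (0:ℝ) < Real.sqrt π := Real.sqrt_pos.mpr pi_pos
  have hC : ((π * σ ^ 2) ^ (-(1:ℝ) / 4)) ^ 2 = (Real.sqrt π * σ)⁻¹ := by
    have hb : (0:ℝ) < π * σ ^ 2 := by positivity
    rw [← Real.rpow_natCast ((π * σ ^ 2) ^ (-(1:ℝ) / 4)) 2, ← Real.rpow_mul hb.le]
    rw [show (-(1:ℝ) / 4 * (2:ℕ)) = -(1 / 2) by push_cast; ring]
    rw [Real.rpow_neg hb.le, ← Real.sqrt_eq_rpow,
      Real.sqrt_mul pi_pos.le, Real.sqrt_sq hσ.le]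
  have hexp2 : ∀ x : ℝ, Real.exp (-(x - μ) ^ 2 / (2 * σ ^ 2)) ^ 2 = GaussRefAux.Eg σ μ x := by
    intro x
    rw [sq, ← Real.exp_add]
    unfold GaussRefAux.Eg
    congr 1
    ring
  have hfun : (fun x : ℝ => 2 * π * min (1 - x) (1 + x) * (h x) ^ 2)
      = fun x => 2 * π * (Real.sqrt π * σ)⁻¹ * (min (1 - x) (1 + x) * GaussRefAux.Eg σ μ x) := by
    funext x
    rw [hh x, mul_pow, hC, hexp2 x]
    ring
  rw [hfun, MeasureTheory.integral_const_mul, GaussRefAux.main_integral hσ, herf]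
  have hK : (∫ t in (0:ℝ)..(μ / σ), Real.exp (-t ^ 2)) = GaussRefAux.Phi (μ / σ) := rfl
  rw [hK]
  have hss : Real.sqrt π * Real.sqrt π = π := Real.mul_self_sqrt pi_pos.le
  set K := GaussRefAux.Phi (μ / σ) with hKdef
  set e := Real.exp (-μ ^ 2 / σ ^ 2) with hedef
  field_simp
  linear_combination σ * e * hss
end

section
/- Let m > 0 and let φ : ℝ → ℝ be continuous with compact support contained in (0, ∞). Define G : (0,∞) × (0,∞) → ℝ by G(r,s) := exp(−m·R)·(1 + 1/(m·R))·(cosh(m·ρ) − sinh(m·ρ)/(m·ρ)) / (m·r·s), where R := max(r,s) and ρ := min(r,s), and set u(r) := ∫₀^∞ G(r,s)·φ(s)·s² ds for r > 0. Then u is twice continuously differentiable on (0, ∞) and satisfies −u''(r) − (2/r)·u'(r) + (2/r²)·u(r) + m²·u(r) = φ(r) for all r > 0. -/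
open MeasureTheory Real

noncomputable def Areg (m x : ℝ) : ℝ := (Real.cosh (m*x) - Real.sinh (m*x) / (m*x)) / x
noncomputable def Aderiv (m x : ℝ) : ℝ :=
  m * Real.sinh (m*x)/x - 2*Real.cosh (m*x)/x^2 + 2*Real.sinh (m*x)/(m*x^3)
noncomputable def Aderiv2 (m x : ℝ) : ℝ :=
  m^2*Real.cosh (m*x)/x - 3*m*Real.sinh (m*x)/x^2 + 6*Real.cosh (m*x)/x^3
    - 6*Real.sinh (m*x)/(m*x^4)
noncomputable def Bdec (m x : ℝ) : ℝ := Real.exp (-(m*x)) * (1 + 1/(m*x)) / x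
noncomputable def Bderiv (m x : ℝ) : ℝ :=
  Real.exp (-(m*x)) * (-(m/x) - 2/x^2 - 2/(m*x^3))
noncomputable def Bderiv2 (m x : ℝ) : ℝ :=
  Real.exp (-(m*x)) * (m^2/x + 3*m/x^2 + 6/x^3 + 6/(m*x^4))

noncomputable def psiA (m : ℝ) (φ : ℝ → ℝ) (s : ℝ) : ℝ := Areg m s * φ s * s^2
noncomputable def psiB (m : ℝ) (φ : ℝ → ℝ) (s : ℝ) : ℝ := Bdec m s * φ s * s^2
noncomputable def FF (m : ℝ) (φ : ℝ → ℝ) (r : ℝ) : ℝ := ∫ s in (0:ℝ)..r, psiA m φ s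
noncomputable def HH (m : ℝ) (φ : ℝ → ℝ) (r : ℝ) : ℝ :=
  (∫ s in Set.Ioi (0:ℝ), psiB m φ s) - ∫ s in (0:ℝ)..r, psiB m φ s
noncomputable def ww (m : ℝ) (φ : ℝ → ℝ) (r : ℝ) : ℝ :=
  (Bdec m r * FF m φ r + Areg m r * HH m φ r) / m
noncomputable def ww1 (m : ℝ) (φ : ℝ → ℝ) (r : ℝ) : ℝ :=
  (Bderiv m r * FF m φ r + Aderiv m r * HH m φ r) / m
noncomputable def ww2 (m : ℝ) (φ : ℝ → ℝ) (r : ℝ) : ℝ :=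
  (Bderiv2 m r * FF m φ r + Aderiv2 m r * HH m φ r) / m - φ r

variable {m x : ℝ} {φ : ℝ → ℝ}

lemma hasDerivAt_Areg (hm : m ≠ 0) (hx : x ≠ 0) :
    HasDerivAt (Areg m) (Aderiv m x) x := by
  have hmx : m * x ≠ 0 := mul_ne_zero hm hx
  have hc : HasDerivAt (fun x => Real.cosh (m*x)) (m * Real.sinh (m*x)) x := by
    simpa [mul_comm, Function.comp_def] using (Real.hasDerivAt_cosh (m*x)).comp x ((hasDerivAt_id x).const_mul m)
  have hs : HasDerivAt (fun x => Real.sinh (m*x)) (m * Real.cosh (m*x)) x := by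
    simpa [mul_comm, Function.comp_def] using (Real.hasDerivAt_sinh (m*x)).comp x ((hasDerivAt_id x).const_mul m)
  have hd : HasDerivAt (fun x => m * x) m x := by
    simpa using (hasDerivAt_id x).const_mul m
  have h1 : HasDerivAt (fun x => Real.cosh (m*x) - Real.sinh (m*x)/(m*x))
      (m * Real.sinh (m*x) - (m * Real.cosh (m*x) * (m*x) - Real.sinh (m*x) * m)/(m*x)^2) x :=
    hc.sub (hs.div hd hmx)
  have : HasDerivAt (Areg m) _ x := (h1.div (hasDerivAt_id x) hx)
  convert this using 1
  unfold Aderiv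
  field_simp
  ring

lemma hasDerivAt_Aderiv (hm : m ≠ 0) (hx : x ≠ 0) :
    HasDerivAt (Aderiv m) (Aderiv2 m x) x := by
  have hc : HasDerivAt (fun x => Real.cosh (m*x)) (m * Real.sinh (m*x)) x := by
    simpa [mul_comm, Function.comp_def] using (Real.hasDerivAt_cosh (m*x)).comp x ((hasDerivAt_id x).const_mul m)
  have hs : HasDerivAt (fun x => Real.sinh (m*x)) (m * Real.cosh (m*x)) x := by
    simpa [mul_comm, Function.comp_def] using (Real.hasDerivAt_sinh (m*x)).comp x ((hasDerivAt_id x).const_mul m)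
  have hp2 : HasDerivAt (fun x : ℝ => x^2) (2*x^(2-1)) x := by
    simpa using hasDerivAt_pow 2 x
  have hp3 : HasDerivAt (fun x : ℝ => m*x^3) (m*(3*x^(3-1))) x :=
    (hasDerivAt_pow 3 x).const_mul m
  have h1 := ((hs.const_mul m).div (hasDerivAt_id x) hx).sub
    ((hc.const_mul 2).div hp2 (pow_ne_zero 2 hx))
  have h2 : HasDerivAt (Aderiv m) _ x := h1.add ((hs.const_mul 2).div hp3 (by positivity))
  convert h2 using 1
  unfold Aderiv2
  simp only [id_eq, Pi.mul_apply]
  field_simp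
  ring

lemma hasDerivAt_Bdec (hm : m ≠ 0) (hx : x ≠ 0) :
    HasDerivAt (Bdec m) (Bderiv m x) x := by
  have he : HasDerivAt (fun x => Real.exp (-(m*x))) (-m * Real.exp (-(m*x))) x := by
    simpa [mul_comm, Function.comp_def] using (Real.hasDerivAt_exp (-(m*x))).comp x
      (((hasDerivAt_id x).const_mul m).neg)
  have hd : HasDerivAt (fun x => m * x) m x := by
    simpa using (hasDerivAt_id x).const_mul m
  have h1 : HasDerivAt (fun x => (1:ℝ) + 1/(m*x)) (-(1*m)/(m*x)^2) x := by
    simpa only [zero_add, zero_mul, zero_sub] using (show HasDerivAt (fun x => (1:ℝ) + 1/(m*x)) _ x from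
      (hasDerivAt_const x (1:ℝ)).add ((hasDerivAt_const x (1:ℝ)).div hd
      (mul_ne_zero hm hx)))
  have h2 : HasDerivAt (Bdec m) _ x := (he.mul h1).div (hasDerivAt_id x) hx
  convert h2 using 1
  unfold Bderiv
  simp only [id_eq, Pi.mul_apply]
  field_simp
  ring

lemma hasDerivAt_Bderiv (hm : m ≠ 0) (hx : x ≠ 0) :
    HasDerivAt (Bderiv m) (Bderiv2 m x) x := by
  have he : HasDerivAt (fun x => Real.exp (-(m*x))) (-m * Real.exp (-(m*x))) x := by
    simpa [mul_comm, Function.comp_def] using (Real.hasDerivAt_exp (-(m*x))).comp x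
      (((hasDerivAt_id x).const_mul m).neg)
  have hp2 : HasDerivAt (fun x : ℝ => x^2) (2*x^(2-1)) x := by
    simpa using hasDerivAt_pow 2 x
  have hp3 : HasDerivAt (fun x : ℝ => m*x^3) (m*(3*x^(3-1))) x :=
    (hasDerivAt_pow 3 x).const_mul m
  have h1 : HasDerivAt (fun x : ℝ => -(m/x) - 2/x^2 - 2/(m*x^3))
      (-((0*x - m*1)/x^2) - (0*x^2 - 2*(2*x^(2-1)))/(x^2)^2
        - (0*(m*x^3) - 2*(m*(3*x^(3-1))))/(m*x^3)^2) x := by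
    exact ((((hasDerivAt_const x m).div (hasDerivAt_id x) hx).neg).sub
      ((hasDerivAt_const x (2:ℝ)).div hp2 (pow_ne_zero 2 hx))).sub
      ((hasDerivAt_const x (2:ℝ)).div hp3 (by positivity))
  have h2 : HasDerivAt (Bderiv m) _ x := he.mul h1
  convert h2 using 1
  unfold Bderiv2
  field_simp
  ring

lemma Areg_ode (hm : m ≠ 0) (hx : x ≠ 0) :
    -Aderiv2 m x - (2/x) * Aderiv m x + (2/x^2 + m^2) * Areg m x = 0 := by
  unfold Areg Aderiv Aderiv2
  field_simp
  ring

lemma Bdec_ode (hm : m ≠ 0) (hx : x ≠ 0) :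
    -Bderiv2 m x - (2/x) * Bderiv m x + (2/x^2 + m^2) * Bdec m x = 0 := by
  unfold Bdec Bderiv Bderiv2
  field_simp
  ring

lemma wronskian_AB (hm : m ≠ 0) (hx : x ≠ 0) :
    Aderiv m x * Bdec m x * x^2 - Areg m x * Bderiv m x * x^2 = m := by
  unfold Areg Aderiv Bdec Bderiv
  rw [Real.cosh_eq, Real.sinh_eq, Real.exp_neg]
  have ht : Real.exp (m*x) ≠ 0 := (Real.exp_pos _).ne'
  field_simp
  ring

lemma continuousAt_Aderiv2 (hm : m ≠ 0) (hx : x ≠ 0) : ContinuousAt (Aderiv2 m) x := by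
  unfold Aderiv2
  fun_prop (disch := positivity)

lemma continuousAt_Bderiv2 (hm : m ≠ 0) (hx : x ≠ 0) : ContinuousAt (Bderiv2 m) x := by
  unfold Bderiv2
  fun_prop (disch := positivity)

lemma psi_cont (hφc : Continuous φ) (hφsupp : tsupport φ ⊆ Set.Ioi (0:ℝ))
    {W : ℝ → ℝ} (hW : ∀ x : ℝ, x ≠ 0 → ContinuousAt W x) :
    Continuous (fun s => W s * φ s * s^2) := by
  rw [continuous_iff_continuousAt]
  intro x
  by_cases hx : x ∈ tsupport φ
  · have hx0 : x ≠ 0 := ne_of_gt (hφsupp hx)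
    exact ((hW x hx0).mul hφc.continuousAt).mul (by fun_prop)
  · have hev : ∀ᶠ y in nhds x, φ y = 0 := by
      filter_upwards [(isClosed_tsupport φ).isOpen_compl.mem_nhds hx] with y hy
      exact image_eq_zero_of_notMem_tsupport hy
    have hev' : ∀ᶠ y in nhds x, W y * φ y * y^2 = (0:ℝ) := by
      filter_upwards [hev] with y hy; simp [hy]
    exact ContinuousAt.congr continuousAt_const (hev'.mono fun y hy => hy.symm)

lemma psi_integrable (hφc : Continuous φ) (hφs : HasCompactSupport φ)
    (hφsupp : tsupport φ ⊆ Set.Ioi (0:ℝ))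
    {W : ℝ → ℝ} (hW : ∀ x : ℝ, x ≠ 0 → ContinuousAt W x) :
    Integrable (fun s => W s * φ s * s^2) := by
  refine (psi_cont hφc hφsupp hW).integrable_of_hasCompactSupport ?_
  refine hφs.mono fun s hs => ?_
  simp only [Function.mem_support] at hs ⊢
  intro h
  exact hs (by simp [h])

/-- The Green's function
`G(r,s) = e^{-mR}(1 + 1/(mR))(cosh(mρ) - sinh(mρ)/(mρ))/(m r s)`, with `R = max(r,s)` and
`ρ = min(r,s)`, inverts the radial Helmholtz operator `-∂² - (2/r)∂ + 2/r² + m²` at angular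
momentum `ℓ = 1`: for continuous `φ` with compact support in `(0,∞)`, the function
`u(r) = ∫₀^∞ G(r,s) φ(s) s² ds` is `C²` on `(0,∞)` and satisfies
`-u'' - (2/r)u' + (2/r²)u + m²u = φ` there. -/
theorem greens_function_radial_helmholtz_ell_one
    (m : ℝ) (hm : 0 < m)
    (φ : ℝ → ℝ) (hφc : Continuous φ) (hφs : HasCompactSupport φ)
    (hφsupp : tsupport φ ⊆ Set.Ioi (0 : ℝ))
    (G : ℝ → ℝ → ℝ)
    (hG : ∀ r ∈ Set.Ioi (0:ℝ), ∀ s ∈ Set.Ioi (0:ℝ),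
      G r s = Real.exp (-(m * max r s)) * (1 + 1 / (m * max r s)) *
        (Real.cosh (m * min r s) - Real.sinh (m * min r s) / (m * min r s)) / (m * r * s))
    (u : ℝ → ℝ)
    (hu : ∀ r ∈ Set.Ioi (0:ℝ), u r = ∫ s in Set.Ioi (0:ℝ), G r s * φ s * s ^ 2) :
    ContDiffOn ℝ 2 u (Set.Ioi (0:ℝ)) ∧
      ∀ r ∈ Set.Ioi (0:ℝ),
        -(deriv (deriv u) r) - (2 / r) * deriv u r + (2 / r ^ 2) * u r + m ^ 2 * u r = φ r := by
  have hm' : m ≠ 0 := hm.ne'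
  have hAc : ∀ x : ℝ, x ≠ 0 → ContinuousAt (Areg m) x := fun x hx =>
    (hasDerivAt_Areg hm' hx).continuousAt
  have hBc : ∀ x : ℝ, x ≠ 0 → ContinuousAt (Bdec m) x := fun x hx =>
    (hasDerivAt_Bdec hm' hx).continuousAt
  have hψAc : Continuous (psiA m φ) := psi_cont hφc hφsupp hAc
  have hψBc : Continuous (psiB m φ) := psi_cont hφc hφsupp hBc
  have hψAi : Integrable (psiA m φ) := psi_integrable hφc hφs hφsupp hAc
  have hψBi : Integrable (psiB m φ) := psi_integrable hφc hφs hφsupp hBc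
  -- u = ww on Ioi 0
  have hsplit : ∀ r ∈ Set.Ioi (0:ℝ), u r = ww m φ r := by
    intro r hr
    have hr0 : (0:ℝ) < r := hr
    rw [hu r hr]
    have hEA : Set.EqOn (fun s => G r s * φ s * s ^ 2)
        (fun s => (Bdec m r / m) * psiA m φ s) (Set.Ioc 0 r) := by
      intro s hs
      have hs0 : (0:ℝ) < s := hs.1
      have hmax : max r s = r := max_eq_left hs.2
      have hmin : min r s = s := min_eq_right hs.2
      simp only
      rw [hG r hr s hs0, hmax, hmin]
      unfold psiA Areg Bdec
      field_simp
    have hEB : Set.EqOn (fun s => G r s * φ s * s ^ 2)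
        (fun s => (Areg m r / m) * psiB m φ s) (Set.Ioi r) := by
      intro s hs
      have hsr : r ≤ s := le_of_lt hs
      have hs0 : (0:ℝ) < s := lt_of_lt_of_le hr0 hsr
      have hmax : max r s = s := max_eq_right hsr
      have hmin : min r s = r := min_eq_left hsr
      simp only
      rw [hG r hr s hs0, hmax, hmin]
      unfold psiB Areg Bdec
      field_simp
    have hiA : IntegrableOn (fun s => G r s * φ s * s ^ 2) (Set.Ioc 0 r) :=
      ((hψAi.const_mul (Bdec m r / m)).integrableOn).congr_fun hEA.symm measurableSet_Ioc
    have hiB : IntegrableOn (fun s => G r s * φ s * s ^ 2) (Set.Ioi r) :=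
      ((hψBi.const_mul (Areg m r / m)).integrableOn).congr_fun hEB.symm measurableSet_Ioi
    rw [← Set.Ioc_union_Ioi_eq_Ioi hr0.le,
      setIntegral_union (Set.Ioc_disjoint_Ioi le_rfl) measurableSet_Ioi hiA hiB,
      setIntegral_congr_fun measurableSet_Ioc hEA,
      setIntegral_congr_fun measurableSet_Ioi hEB,
      integral_const_mul, integral_const_mul]
    have hBint : (∫ s in Set.Ioi (0:ℝ), psiB m φ s)
        = (∫ s in Set.Ioc (0:ℝ) r, psiB m φ s) + ∫ s in Set.Ioi r, psiB m φ s := by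
      rw [← setIntegral_union (Set.Ioc_disjoint_Ioi le_rfl) measurableSet_Ioi
        hψBi.integrableOn hψBi.integrableOn, Set.Ioc_union_Ioi_eq_Ioi hr0.le]
    unfold ww FF HH
    rw [intervalIntegral.integral_of_le hr0.le, intervalIntegral.integral_of_le hr0.le, hBint]
    ring
  -- derivative facts
  have hF : ∀ r : ℝ, HasDerivAt (FF m φ) (psiA m φ r) r := by
    intro r
    exact intervalIntegral.integral_hasDerivAt_right (hψAc.intervalIntegrable 0 r)
      (hψAc.stronglyMeasurableAtFilter _ _) hψAc.continuousAt
  have hH : ∀ r : ℝ, HasDerivAt (HH m φ) (-psiB m φ r) r := by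
    intro r
    exact (hasDerivAt_const r _).sub (intervalIntegral.integral_hasDerivAt_right
      (hψBc.intervalIntegrable 0 r) (hψBc.stronglyMeasurableAtFilter _ _) hψBc.continuousAt)
      |>.congr_deriv (by ring)
  have hw1 : ∀ r ∈ Set.Ioi (0:ℝ), HasDerivAt (ww m φ) (ww1 m φ r) r := by
    intro r hr
    have hr0 : r ≠ 0 := ne_of_gt hr
    have h : HasDerivAt (ww m φ) _ r := (((hasDerivAt_Bdec hm' hr0).mul (hF r)).add
      (((hasDerivAt_Areg hm' hr0)).mul (hH r))).div_const m
    convert h using 1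
    unfold ww1 psiA psiB
    ring
  have hw2 : ∀ r ∈ Set.Ioi (0:ℝ), HasDerivAt (ww1 m φ) (ww2 m φ r) r := by
    intro r hr
    have hr0 : r ≠ 0 := ne_of_gt hr
    have h : HasDerivAt (ww1 m φ) _ r := (((hasDerivAt_Bderiv hm' hr0).mul (hF r)).add
      (((hasDerivAt_Aderiv hm' hr0)).mul (hH r))).div_const m
    convert h using 1
    have hw := wronskian_AB hm' (x := r) hr0
    unfold ww2 psiA psiB
    field_simp
    linear_combination (φ r) * hw
  have hueq : Set.EqOn u (ww m φ) (Set.Ioi (0:ℝ)) := fun r hr => hsplit r hr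
  have hDu : ∀ r ∈ Set.Ioi (0:ℝ), deriv u r = ww1 m φ r := by
    intro r hr
    have hev : u =ᶠ[nhds r] ww m φ :=
      Filter.eventuallyEq_of_mem (isOpen_Ioi.mem_nhds hr) hueq
    rw [hev.deriv_eq]
    exact (hw1 r hr).deriv
  have hDDu : ∀ r ∈ Set.Ioi (0:ℝ), deriv (deriv u) r = ww2 m φ r := by
    intro r hr
    have hev : deriv u =ᶠ[nhds r] ww1 m φ :=
      Filter.eventuallyEq_of_mem (isOpen_Ioi.mem_nhds hr) (fun y hy => hDu y hy)
    rw [hev.deriv_eq]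
    exact (hw2 r hr).deriv
  constructor
  · -- C² regularity
    have hC0 : ContinuousOn (ww2 m φ) (Set.Ioi (0:ℝ)) := by
      intro r hr
      have hr0 : r ≠ 0 := ne_of_gt hr
      refine ContinuousWithinAt.sub ?_ hφc.continuousAt.continuousWithinAt
      refine (ContinuousWithinAt.add ?_ ?_).div_const m
      · exact ((continuousAt_Bderiv2 hm' hr0).mul (hF r).continuousAt).continuousWithinAt
      · exact ((continuousAt_Aderiv2 hm' hr0).mul (hH r).continuousAt).continuousWithinAt
    have hw1C : ContDiffOn ℝ 1 (ww1 m φ) (Set.Ioi (0:ℝ)) := by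
      rw [show (1 : WithTop ℕ∞) = 0 + 1 by norm_num,
        contDiffOn_succ_iff_deriv_of_isOpen isOpen_Ioi]
      refine ⟨fun r hr => (hw2 r hr).differentiableAt.differentiableWithinAt, by simp, ?_⟩
      rw [contDiffOn_zero]
      refine hC0.congr fun r hr => ?_
      exact (hw2 r hr).deriv
    have hwC : ContDiffOn ℝ 2 (ww m φ) (Set.Ioi (0:ℝ)) := by
      rw [show (2 : WithTop ℕ∞) = 1 + 1 by norm_num,
        contDiffOn_succ_iff_deriv_of_isOpen isOpen_Ioi]
      refine ⟨fun r hr => (hw1 r hr).differentiableAt.differentiableWithinAt, by simp, ?_⟩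
      refine hw1C.congr fun r hr => ?_
      exact (hw1 r hr).deriv
    exact hwC.congr hueq
  · intro r hr
    have hr0 : r ≠ 0 := ne_of_gt (Set.mem_Ioi.mp hr)
    rw [hDDu r hr, hDu r hr, hsplit r hr]
    have hodeA := Areg_ode hm' (x := r) hr0
    have hodeB := Bdec_ode hm' (x := r) hr0
    unfold ww ww1 ww2
    linear_combination (FF m φ r / m) * hodeB + (HH m φ r / m) * hodeA
end

section
/- Let H be a finite-dimensional complex inner product space and L ⊆ H a real-linear subspace that is standard. Let T : H → H be the Tomita operator of L and Δ := T† ∘ T the one-particle modular operator. If L is in addition factorial (L ∩ L' = {0}), then 1 is not an eigenvalue of Δ, i.e. ker(Δ − 1) = {0}. -/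
/-- For a standard real subspace `L` of a finite-dimensional complex inner product space,
with Tomita operator `T` and modular operator `Δ = T† T` (adjoint for the real inner
product `Re⟨·,·⟩`): if `L` is factorial, then `1` is not an eigenvalue of `Δ`. -/
theorem modular_operator_one_not_eigenvalue_of_factorial
    {H : Type*} [NormedAddCommGroup H] [InnerProductSpace ℂ H] [FiniteDimensional ℂ H]
    (L L' : Submodule ℝ H)
    -- `L'` is the symplectic complement of `L`
    (hL' : ∀ g : H, g ∈ L' ↔ ∀ f ∈ L, (inner ℂ f g : ℂ).im = 0)
    -- `L` is standard: `L ∩ iL = {0}` and `L + iL = H`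
    (hstd₁ : ∀ x ∈ L, ∀ y ∈ L, x = Complex.I • y → x = 0)
    (hstd₂ : ∀ z : H, ∃ f ∈ L, ∃ g ∈ L, z = f + Complex.I • g)
    -- `T` is the Tomita operator of `L`: `T(f + i g) = f - i g` for `f, g ∈ L`
    (T : H →ₗ[ℝ] H) (hT : ∀ f ∈ L, ∀ g ∈ L, T (f + Complex.I • g) = f - Complex.I • g)
    -- `T†` is the adjoint of `T` with respect to the real inner product `Re⟨·,·⟩`
    (Tadj : H →ₗ[ℝ] H)
    (hTadj : ∀ x y : H, (inner ℂ (Tadj x) y : ℂ).re = (inner ℂ x (T y) : ℂ).re)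
    -- the one-particle modular operator `Δ = T† ∘ T`
    (Δ : H →ₗ[ℝ] H) (hΔ : ∀ x, Δ x = Tadj (T x))
    -- `L` is factorial: `L ∩ L' = {0}`
    (hfac : L ⊓ L' = ⊥) :
    ∀ x : H, Δ x = x → x = 0 := by
  intro x hx
  obtain ⟨f, hf, g, hg, hxd⟩ := hstd₂ x
  have hTx : T x = f - Complex.I • g := by rw [hxd]; exact hT f hf g hg
  have key : ∀ y : H, (inner ℂ (T x) (T y) : ℂ).re = (inner ℂ x y : ℂ).re := by
    intro y
    have h1 := hTadj (T x) y
    rw [← hΔ, hx] at h1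
    exact h1.symm
  have himsymm : ∀ a b : H, (inner ℂ a b : ℂ).im = -((inner ℂ b a : ℂ).im) := by
    intro a b
    rw [← inner_conj_symm b a, Complex.conj_im, neg_neg]
  have hfL' : f ∈ L' := by
    rw [hL']
    intro k hk
    have hTy : T (Complex.I • k) = -(Complex.I • k) := by
      have := hT 0 L.zero_mem k hk
      simpa using this
    have h := key (Complex.I • k)
    rw [hTy, hTx, hxd] at h
    simp only [inner_sub_left, inner_add_left, inner_smul_left, inner_smul_right,
      inner_neg_right, Complex.conj_I, Complex.neg_re, Complex.neg_im, Complex.sub_re,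
      Complex.sub_im, Complex.add_re, Complex.add_im, Complex.mul_re, Complex.mul_im,
      Complex.I_re, Complex.I_im] at h
    have h2 := himsymm k f
    rw [h2]
    ring_nf at h ⊢
    linarith
  have hgL' : g ∈ L' := by
    rw [hL']
    intro k hk
    have hTy : T k = k := by
      have := hT k hk 0 L.zero_mem
      simpa using this
    have h := key k
    rw [hTy, hTx, hxd] at h
    simp only [inner_sub_left, inner_add_left, inner_smul_left, Complex.conj_I,
      Complex.neg_re, Complex.neg_im, Complex.sub_re, Complex.sub_im, Complex.add_re,
      Complex.add_im, Complex.mul_re, Complex.mul_im, Complex.I_re, Complex.I_im] at h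
    have h2 := himsymm k g
    rw [h2]
    ring_nf at h ⊢
    linarith
  have hf0 : f = 0 := by
    have : f ∈ L ⊓ L' := ⟨hf, hfL'⟩
    rwa [hfac, Submodule.mem_bot] at this
  have hg0 : g = 0 := by
    have : g ∈ L ⊓ L' := ⟨hg, hgL'⟩
    rwa [hfac, Submodule.mem_bot] at this
  rw [hxd, hf0, hg0]
  simp
end
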